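/- arXiv:2409.02812 — 6 statements merged into one kernel-verified Lean document; each statement's English description precedes it below -/
import Mathlib

section
/- For integers t ≥ 2m ≥ 2, let N_m(k) denote the number of trees on vertex set {1,…,k}, rooted at vertex 1, whose height is at least m−1. Then |M(t,m)| = (1/2) · Σ_{k=m}^{t−m} binom(t,k) · k · (t−k) · N_m(k) · N_m(t−k). -/
open SimpleGraph Finset Real Filter
open scoped Classical

noncomputable section

/-- `P` is a system of pairwise vertex-disjoint paths in `G`, each of length at least `ℓ`
(a path of length `ℓ` has `ℓ` edges and `ℓ+1` vertices). -/
def IsPathSystem {V : Type*} (G : SimpleGraph V) (ℓ : ℕ)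
    (P : Finset (Σ u : V, Σ v : V, G.Walk u v)) : Prop :=
  (∀ p ∈ P, p.2.2.IsPath ∧ ℓ ≤ p.2.2.length) ∧
    ∀ p ∈ P, ∀ q ∈ P, p ≠ q → ∀ x ∈ p.2.2.support, x ∉ q.2.2.support

/-- Real-threshold variant of `IsPathSystem`: each path has length at least `r : ℝ`. -/
def IsPathSystemR {V : Type*} (G : SimpleGraph V) (r : ℝ)
    (P : Finset (Σ u : V, Σ v : V, G.Walk u v)) : Prop :=
  (∀ p ∈ P, p.2.2.IsPath ∧ r ≤ (p.2.2.length : ℝ)) ∧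
    ∀ p ∈ P, ∀ q ∈ P, p ≠ q → ∀ x ∈ p.2.2.support, x ∉ q.2.2.support

/-- The number of vertices covered by the path system `P`. -/
def coveredCard {V : Type*} [DecidableEq V] {G : SimpleGraph V}
    (P : Finset (Σ u : V, Σ v : V, G.Walk u v)) : ℕ :=
  (P.biUnion fun p => p.2.2.support.toFinset).card

/-- `cov G ℓ`: the maximum number of vertices that can be covered by a collection of
pairwise vertex-disjoint paths in `G`, each of length at least `ℓ`. -/
def cov {V : Type*} [DecidableEq V] (G : SimpleGraph V) (ℓ : ℕ) : ℕ :=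
  sSup {n | ∃ P, IsPathSystem G ℓ P ∧ n = coveredCard P}

/-- The edge `uv` of `G` is `m`-centred: `G - uv` contains two vertex-disjoint paths of
length at least `m - 1`, one starting at `u` and one starting at `v`. -/
def IsCentred {V : Type*} (G : SimpleGraph V) (m : ℕ) (u v : V) : Prop :=
  G.Adj u v ∧ ∃ (a b : V) (P : (G.deleteEdges {s(u, v)}).Walk u a)
      (Q : (G.deleteEdges {s(u, v)}).Walk v b),
    P.IsPath ∧ Q.IsPath ∧ m - 1 ≤ P.length ∧ m - 1 ≤ Q.length ∧
      ∀ x ∈ P.support, x ∉ Q.support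

/-- The number of `m`-centred edges of `G`. -/
def centredEdgeCount {V : Type*} (G : SimpleGraph V) (m : ℕ) : ℕ :=
  {e : Sym2 V | ∃ u v, e = s(u, v) ∧ IsCentred G m u v}.ncard

/-- `|M(t,m)|`: the number of pairs `(e, T)` where `T` is a tree on `{1,…,t}` and `e` is an
`m`-centred edge of `T`. -/
def Mcard (t m : ℕ) : ℕ :=
  {p : Sym2 (Fin t) × SimpleGraph (Fin t) |
    p.2.IsTree ∧ ∃ u v, p.1 = s(u, v) ∧ IsCentred p.2 m u v}.ncard

/-- Probability weight of a fixed graph `G` under the Erdős–Rényi measure `G(n,p)`. -/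
def erWeight (n : ℕ) (p : ℝ) (G : SimpleGraph (Fin n)) : ℝ :=
  p ^ G.edgeSet.ncard * (1 - p) ^ (n.choose 2 - G.edgeSet.ncard)

/-- Probability of the event `A` under the Erdős–Rényi measure `G(n,p)`. -/
def erProb (n : ℕ) (p : ℝ) (A : Set (SimpleGraph (Fin n))) : ℝ :=
  ∑ G ∈ Finset.univ.filter (· ∈ A), erWeight n p G

/-- Expectation of `X` under the Erdős–Rényi measure `G(n,p)`. -/
def erExpect (n : ℕ) (p : ℝ) (X : SimpleGraph (Fin n) → ℝ) : ℝ :=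
  ∑ G : SimpleGraph (Fin n), erWeight n p G * X G

/-- Probability that a uniformly random labelled tree on `{1,…,t}` lies in `A`. -/
def treeProb (t : ℕ) (A : Set (SimpleGraph (Fin t))) : ℝ :=
  ((Finset.univ.filter fun G : SimpleGraph (Fin t) => G.IsTree ∧ G ∈ A).card : ℝ) /
    (t : ℝ) ^ (t - 2)

/-- Expectation of `f` for a uniformly random labelled tree on `{1,…,t}`. -/
def treeExpect (t : ℕ) (f : SimpleGraph (Fin t) → ℝ) : ℝ :=
  (∑ G ∈ Finset.univ.filter (fun G : SimpleGraph (Fin t) => G.IsTree), f G) /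
    (t : ℝ) ^ (t - 2)

/-- Probability that a uniformly random rooted labelled tree on `{1,…,t}`
(a pair of a tree and a root) lies in `A`. -/
def rootedTreeProb (t : ℕ) (A : Set (SimpleGraph (Fin t) × Fin t)) : ℝ :=
  ((Finset.univ.filter fun p : SimpleGraph (Fin t) × Fin t => p.1.IsTree ∧ p ∈ A).card : ℝ) /
    (t : ℝ) ^ (t - 1)

/-- `N_m(k)`: the number of trees on vertex set `{1,…,k}`, rooted at vertex `1`, whose height
(the maximum distance from the root to a vertex) is at least `m − 1`. -/
def Nm (m : ℕ) : ℕ → ℕ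
  | 0 => 0
  | (k + 1) =>
    {G : SimpleGraph (Fin (k + 1)) | G.IsTree ∧ ∃ w : Fin (k + 1), m - 1 ≤ G.dist 0 w}.ncard

namespace Stmt6Aux
variable {V : Type*} {W : Type*}

lemma iso_reachable {G : SimpleGraph V} {G' : SimpleGraph W} (f : G ≃g G') {a b : V} :
    G'.Reachable (f a) (f b) ↔ G.Reachable a b := by
  constructor
  · intro h
    have := h.map f.symm.toHom
    simpa using this
  · intro h; exact h.map f.toHom

lemma iso_dist {G : SimpleGraph V} {G' : SimpleGraph W} (f : G ≃g G') (a b : V) :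
    G'.dist (f a) (f b) = G.dist a b := by
  by_cases h : G.Reachable a b
  · refine le_antisymm ?_ ?_
    · obtain ⟨p, hp⟩ := h.exists_walk_length_eq_dist
      calc G'.dist (f a) (f b) ≤ (p.map f.toHom).length := dist_le _
        _ = G.dist a b := by rw [Walk.length_map, hp]
    · have h' : G'.Reachable (f a) (f b) := (iso_reachable f).mpr h
      obtain ⟨q, hq⟩ := h'.exists_walk_length_eq_dist
      have := dist_le ((q.map f.symm.toHom).copy (by simp) (by simp) : G.Walk a b)
      simpa [hq] using this
  · have h' : ¬ G'.Reachable (f a) (f b) := fun hr => h ((iso_reachable f).mp hr)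
    rw [dist_eq_zero_iff_eq_or_not_reachable.mpr (Or.inr h'),
      dist_eq_zero_iff_eq_or_not_reachable.mpr (Or.inr h)]

lemma iso_connected {G : SimpleGraph V} {G' : SimpleGraph W} (f : G ≃g G') (h : G.Connected) :
    G'.Connected := by
  haveI : Nonempty W := ⟨f h.nonempty.some⟩
  refine ⟨fun x y => ?_⟩
  have := (iso_reachable f).mpr (h.preconnected (f.symm x) (f.symm y))
  simpa using this

lemma iso_acyclic {G : SimpleGraph V} {G' : SimpleGraph W} (f : G ≃g G') (h : G.IsAcyclic) :
    G'.IsAcyclic := by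
  intro x c hc
  have := hc.map (f := f.symm.toHom) f.symm.injective
  exact h (c := c.map f.symm.toHom) this

lemma iso_isTree {G : SimpleGraph V} {G' : SimpleGraph W} (f : G ≃g G') (h : G.IsTree) :
    G'.IsTree :=
  ⟨iso_connected f h.isConnected, iso_acyclic f h.IsAcyclic⟩

/-- `s` is a union of connected components of `H`. -/
def Side (H : SimpleGraph V) (s : Set V) : Prop := ∀ ⦃a b⦄, H.Adj a b → (a ∈ s ↔ b ∈ s)

lemma Side.compl {H : SimpleGraph V} {s : Set V} (hs : Side H s) : Side H sᶜ :=
  fun a b hab => by simp [hs hab]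

lemma side_reach (H : SimpleGraph V) (x : V) : Side H {y | H.Reachable x y} := by
  intro a b hab
  constructor
  · intro ha; exact ha.trans hab.reachable
  · intro hb; exact hb.trans hab.symm.reachable

lemma Side.support_subset {H : SimpleGraph V} {s : Set V} (hs : Side H s) :
    ∀ {x y : V} (p : H.Walk x y), x ∈ s → ∀ z ∈ p.support, z ∈ s := by
  intro x y p
  induction p with
  | nil => intro hx z hz; simp at hz; subst hz; exact hx
  | @cons x w y h p ih =>
    intro hx z hz
    rw [Walk.support_cons] at hz
    rcases List.mem_cons.mp hz with rfl | hz
    · exact hx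
    · exact ih ((hs h).mp hx) z hz

lemma Side.mem_of_reachable {H : SimpleGraph V} {s : Set V} (hs : Side H s) {x y : V}
    (h : H.Reachable x y) (hx : x ∈ s) : y ∈ s := by
  obtain ⟨p⟩ := h
  exact hs.support_subset p hx y p.end_mem_support

lemma Side.exists_lift {H : SimpleGraph V} {s : Set V} (hs : Side H s) :
    ∀ {x y : V} (p : H.Walk x y) (hx : x ∈ s) (hy : y ∈ s),
      ∃ q : (H.induce s).Walk ⟨x, hx⟩ ⟨y, hy⟩,
        q.map (Embedding.induce s).toHom = p := by
  intro x y p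
  induction p with
  | nil => intro hx hy; exact ⟨Walk.nil, rfl⟩
  | @cons x w y h p ih =>
    intro hx hy
    have hw : w ∈ s := (hs h).mp hx
    obtain ⟨q, hq⟩ := ih hw hy
    refine ⟨Walk.cons (by simpa using h : (H.induce s).Adj ⟨x, hx⟩ ⟨w, hw⟩) q, ?_⟩
    simp [Walk.map_cons, hq]

lemma Side.reachable_induce_iff {H : SimpleGraph V} {s : Set V} (hs : Side H s) {x y : V}
    (hx : x ∈ s) (hy : y ∈ s) :
    (H.induce s).Reachable ⟨x, hx⟩ ⟨y, hy⟩ ↔ H.Reachable x y := by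
  constructor
  · intro ⟨q⟩
    exact ⟨(q.map (Embedding.induce s).toHom).copy (by simp) (by simp)⟩
  · intro ⟨p⟩
    obtain ⟨q, _⟩ := hs.exists_lift p hx hy
    exact ⟨q⟩

lemma Side.dist_induce {H : SimpleGraph V} {s : Set V} (hs : Side H s) {x y : V}
    (hx : x ∈ s) (hy : y ∈ s) :
    (H.induce s).dist ⟨x, hx⟩ ⟨y, hy⟩ = H.dist x y := by
  by_cases h : H.Reachable x y
  · refine le_antisymm ?_ ?_
    · obtain ⟨p, hp⟩ := h.exists_walk_length_eq_dist
      obtain ⟨q, hq⟩ := hs.exists_lift p hx hy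
      have : q.length = p.length := (Walk.length_map _ q).symm.trans (congrArg Walk.length hq)
      calc (H.induce s).dist ⟨x, hx⟩ ⟨y, hy⟩ ≤ q.length := dist_le _
        _ = H.dist x y := by rw [this, hp]
    · obtain ⟨q, hq⟩ := ((hs.reachable_induce_iff hx hy).mpr h).exists_walk_length_eq_dist
      have := dist_le ((q.map (Embedding.induce s).toHom).copy (by simp) (by simp) : H.Walk x y)
      exact this.trans (le_of_eq ((Walk.length_copy _ _ _).trans ((Walk.length_map _ q).trans hq)))
  · have h' : ¬ (H.induce s).Reachable ⟨x, hx⟩ ⟨y, hy⟩ :=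
      fun hr => h ((hs.reachable_induce_iff hx hy).mp hr)
    rw [dist_eq_zero_iff_eq_or_not_reachable.mpr (Or.inr h'),
      dist_eq_zero_iff_eq_or_not_reachable.mpr (Or.inr h)]

lemma induce_acyclic {H : SimpleGraph V} (h : H.IsAcyclic) (s : Set V) :
    (H.induce s).IsAcyclic := by
  intro x c hc
  have := hc.map (f := (Embedding.induce (G := H) s).toHom)
    (Embedding.induce (G := H) s).injective
  exact h (c := c.map (Embedding.induce (G := H) s).toHom) this

lemma exists_path_length_eq_dist {G : SimpleGraph V} {a b : V} (h : G.Reachable a b) :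
    ∃ p : G.Walk a b, p.IsPath ∧ p.length = G.dist a b := by
  obtain ⟨w, hw⟩ := h.exists_walk_length_eq_dist
  refine ⟨w.bypass, w.bypass_isPath, le_antisymm ?_ ?_⟩
  · exact hw ▸ w.length_bypass_le
  · exact dist_le _

lemma acyclic_dist_eq {G : SimpleGraph V} (hG : G.IsAcyclic) {a b : V} {p : G.Walk a b}
    (hp : p.IsPath) : G.dist a b = p.length := by
  obtain ⟨q, hq, hql⟩ := exists_path_length_eq_dist ⟨p⟩
  have h2 : (⟨q, hq⟩ : G.Path a b) = ⟨p, hp⟩ := hG.path_unique _ _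
  have h3 : q = p := congrArg Subtype.val h2
  rw [← hql, h3]

lemma acyclic_deleteEdges {G : SimpleGraph V} (hG : G.IsAcyclic) (s : Set (Sym2 V)) :
    (G.deleteEdges s).IsAcyclic := by
  intro x c hc
  exact hG (c := c.mapLe (G.deleteEdges_le s)) (hc.mapLe _)

lemma reach_dichotomy {T : SimpleGraph V} (hc : T.Connected) {u v : V} (w : V) :
    (T.deleteEdges {s(u, v)}).Reachable u w ∨ (T.deleteEdges {s(u, v)}).Reachable v w := by
  obtain ⟨p⟩ := hc w u
  have key : ∀ {a b : V} (q : T.Walk a b),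
      ((T.deleteEdges {s(u, v)}).Reachable b u ∨ (T.deleteEdges {s(u, v)}).Reachable b v) →
      ((T.deleteEdges {s(u, v)}).Reachable a u ∨ (T.deleteEdges {s(u, v)}).Reachable a v) := by
    intro a b q
    induction q with
    | nil => exact id
    | @cons a c b h q ih =>
      intro hb
      by_cases he : s(a, c) = s(u, v)
      · rw [Sym2.eq_iff] at he
        rcases he with ⟨ha, -⟩ | ⟨ha, -⟩
        · exact Or.inl (by rw [ha])
        · exact Or.inr (by rw [ha])
      · have hadj : (T.deleteEdges {s(u, v)}).Adj a c := by
          rw [deleteEdges_adj]; exact ⟨h, by simpa using he⟩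
        rcases ih hb with hx | hx
        · exact Or.inl (hadj.reachable.trans hx)
        · exact Or.inr (hadj.reachable.trans hx)
  rcases key p (Or.inl (Reachable.refl u)) with h | h
  · exact Or.inl h.symm
  · exact Or.inr h.symm

lemma tree_not_reach {T : SimpleGraph V} (hT : T.IsTree) {u v : V} (huv : T.Adj u v) :
    ¬ (T.deleteEdges {s(u, v)}).Reachable u v := by
  have hb : T.IsBridge s(u, v) := isAcyclic_iff_forall_adj_isBridge.mp hT.IsAcyclic huv
  rw [isBridge_iff] at hb
  exact hb

lemma isCentred_iff {T : SimpleGraph V} (hT : T.IsTree) {m : ℕ} {u v : V} (huv : T.Adj u v) :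
    IsCentred T m u v ↔
      ((∃ a, (T.deleteEdges {s(u, v)}).Reachable u a ∧
          m - 1 ≤ (T.deleteEdges {s(u, v)}).dist u a) ∧
       (∃ b, (T.deleteEdges {s(u, v)}).Reachable v b ∧
          m - 1 ≤ (T.deleteEdges {s(u, v)}).dist v b)) := by
  have hH : (T.deleteEdges {s(u, v)}).IsAcyclic := acyclic_deleteEdges hT.IsAcyclic _
  constructor
  · rintro ⟨-, a, b, P, Q, hP, hQ, hPl, hQl, -⟩
    exact ⟨⟨a, P.reachable, by rw [acyclic_dist_eq hH hP]; exact hPl⟩,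
      ⟨b, Q.reachable, by rw [acyclic_dist_eq hH hQ]; exact hQl⟩⟩
  · rintro ⟨⟨a, ha, hda⟩, ⟨b, hb, hdb⟩⟩
    obtain ⟨P, hP, hPl⟩ := exists_path_length_eq_dist ha
    obtain ⟨Q, hQ, hQl⟩ := exists_path_length_eq_dist hb
    refine ⟨huv, a, b, P, Q, hP, hQ, hPl ▸ hda, hQl ▸ hdb, ?_⟩
    intro x hxP hxQ
    have h1 : (T.deleteEdges {s(u, v)}).Reachable u x :=
      (side_reach _ u).support_subset P (Reachable.refl u) x hxP
    have h2 : (T.deleteEdges {s(u, v)}).Reachable v x :=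
      (side_reach _ v).support_subset Q (Reachable.refl v) x hxQ
    exact tree_not_reach hT huv (h1.trans h2.symm)


/-- the union of two graphs supported on `s` and `sᶜ`. -/
def sideSum (s : Set V) (G₁ : SimpleGraph ↥s) (G₂ : SimpleGraph ↥(sᶜ)) : SimpleGraph V :=
  G₁.map (Function.Embedding.subtype _) ⊔ G₂.map (Function.Embedding.subtype _)

def glue (s : Set V) (u v : V) (G₁ : SimpleGraph ↥s) (G₂ : SimpleGraph ↥(sᶜ)) :
    SimpleGraph V :=
  sideSum s G₁ G₂ ⊔ SimpleGraph.edge u v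

variable {s : Set V} {u v : V} {G₁ : SimpleGraph ↥s} {G₂ : SimpleGraph ↥(sᶜ)}

lemma sideSum_adj {x y : V} : (sideSum s G₁ G₂).Adj x y ↔
    (∃ a b : ↥s, G₁.Adj a b ∧ ↑a = x ∧ ↑b = y) ∨
    (∃ a b : ↥(sᶜ), G₂.Adj a b ∧ ↑a = x ∧ ↑b = y) := by
  rw [sideSum, sup_adj, map_adj, map_adj]
  simp only [Function.Embedding.coe_subtype]

lemma sideSum_side : Side (sideSum s G₁ G₂) s := by
  intro x y hxy
  rw [sideSum_adj] at hxy
  rcases hxy with ⟨a, b, -, rfl, rfl⟩ | ⟨a, b, -, rfl, rfl⟩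
  · simp [a.2, b.2]
  · have ha := a.2; have hb := b.2
    simp only [Set.mem_compl_iff] at ha hb
    simp [ha, hb]

lemma glue_deleteEdges (hu : u ∈ s) (hv : v ∉ s) :
    (glue s u v G₁ G₂).deleteEdges {s(u, v)} = sideSum s G₁ G₂ := by
  ext x y
  rw [deleteEdges_adj]
  constructor
  · rintro ⟨hadj, hne⟩
    rcases hadj with h | h
    · exact h
    · rw [edge_adj] at h
      exfalso; apply hne
      rcases h.1 with ⟨rfl, rfl⟩ | ⟨rfl, rfl⟩
      · simp
      · simp [Sym2.eq_swap]
  · intro h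
    refine ⟨Or.inl h, ?_⟩
    have hside := sideSum_side (G₁ := G₁) (G₂ := G₂) h
    simp only [Set.mem_singleton_iff, Sym2.eq_iff]
    rintro (⟨rfl, rfl⟩ | ⟨rfl, rfl⟩)
    · exact hv (hside.mp hu)
    · exact hv (hside.mpr hu)

/-- homomorphism from `G₁` into the side sum. -/
def homIn₁ : G₁ →g sideSum s G₁ G₂ where
  toFun := Subtype.val
  map_rel' := fun h => sideSum_adj.mpr (Or.inl ⟨_, _, h, rfl, rfl⟩)

def homIn₂ : G₂ →g sideSum s G₁ G₂ where
  toFun := Subtype.val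
  map_rel' := fun h => sideSum_adj.mpr (Or.inr ⟨_, _, h, rfl, rfl⟩)

lemma sideSum_reach₁ (hG₁ : G₁.Connected) (hu : u ∈ s) (w : V) :
    (sideSum s G₁ G₂).Reachable u w ↔ w ∈ s := by
  constructor
  · intro h
    exact sideSum_side.mem_of_reachable h hu
  · intro hw
    exact (hG₁ ⟨u, hu⟩ ⟨w, hw⟩).map (homIn₁ (G₂ := G₂))

lemma sideSum_reach₂ (hG₂ : G₂.Connected) (hv : v ∉ s) (w : V) :
    (sideSum s G₁ G₂).Reachable v w ↔ w ∉ s := by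
  constructor
  · intro h
    exact sideSum_side.compl.mem_of_reachable h hv
  · intro hw
    exact (hG₂ ⟨v, hv⟩ ⟨w, hw⟩).map (homIn₂ (G₁ := G₁))

lemma glue_adj_uv (hu : u ∈ s) (hv : v ∉ s) : (glue s u v G₁ G₂).Adj u v := by
  have : u ≠ v := fun h => hv (h ▸ hu)
  exact Or.inr (by rw [edge_adj]; exact ⟨Or.inl ⟨rfl, rfl⟩, this⟩)

lemma glue_connected (hG₁ : G₁.Connected) (hG₂ : G₂.Connected) (hu : u ∈ s) (hv : v ∉ s) :
    (glue s u v G₁ G₂).Connected := by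
  haveI : Nonempty V := ⟨u⟩
  have key : ∀ w, (glue s u v G₁ G₂).Reachable u w := by
    intro w
    by_cases hw : w ∈ s
    · exact ((sideSum_reach₁ hG₁ hu w).mpr hw).map
        (Hom.ofLE le_sup_left)
    · exact (glue_adj_uv hu hv).reachable.trans
        (((sideSum_reach₂ hG₂ hv w).mpr hw).map (Hom.ofLE le_sup_left))
  exact ⟨fun x y => (key x).symm.trans (key y)⟩

lemma induce_sideSum₁ : (sideSum s G₁ G₂).induce s = G₁ := by
  ext a b
  simp only [comap_adj, Function.Embedding.coe_subtype, sideSum_adj]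
  constructor
  · rintro (⟨a', b', h, ha', hb'⟩ | ⟨a', b', h, ha', hb'⟩)
    · have h1 : a' = a := Subtype.ext ha'
      have h2 : b' = b := Subtype.ext hb'
      rwa [h1, h2] at h
    · exfalso
      have := a'.2
      rw [Set.mem_compl_iff, ha'] at this
      exact this a.2
  · intro h
    exact Or.inl ⟨a, b, h, rfl, rfl⟩

lemma induce_sideSum₂ : (sideSum s G₁ G₂).induce (sᶜ) = G₂ := by
  ext a b
  simp only [comap_adj, Function.Embedding.coe_subtype, sideSum_adj]
  constructor
  · rintro (⟨a', b', h, ha', hb'⟩ | ⟨a', b', h, ha', hb'⟩)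
    · exfalso
      have h2 := a.2
      rw [Set.mem_compl_iff, ← ha'] at h2
      exact h2 a'.2
    · have h1 : a' = a := Subtype.ext ha'
      have h2 : b' = b := Subtype.ext hb'
      rwa [h1, h2] at h
  · intro h
    exact Or.inr ⟨a, b, h, rfl, rfl⟩

lemma glue_acyclic (hG₁ : G₁.IsAcyclic) (hG₂ : G₂.IsAcyclic) (hu : u ∈ s) (hv : v ∉ s) :
    (glue s u v G₁ G₂).IsAcyclic := by
  have hbridge : (glue s u v G₁ G₂).IsBridge s(u, v) := by
    rw [isBridge_iff]
    show ¬ _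
    intro hre
    have hre' : ((glue s u v G₁ G₂).deleteEdges {s(u, v)}).Reachable u v := hre
    rw [glue_deleteEdges hu hv] at hre'
    exact hv (sideSum_side.mem_of_reachable hre' hu)
  intro x c hc
  by_cases he : s(u, v) ∈ c.edges
  · exact (isBridge_iff_adj_and_forall_cycle_notMem (glue_adj_uv hu hv)).mp hbridge c hc he
  · have hce : ∀ e ∈ c.edges, e ∉ ({s(u, v)} : Set (Sym2 V)) := by
      intro e hec hmem
      rw [Set.mem_singleton_iff] at hmem
      exact he (hmem ▸ hec)
    have hc' : (c.toDeleteEdges {s(u, v)} hce).IsCycle := hc.transfer _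
    have hex : ∃ c'' : (sideSum s G₁ G₂).Walk x x, c''.IsCycle := by
      rw [← glue_deleteEdges (G₁ := G₁) (G₂ := G₂) hu hv]
      exact ⟨_, hc'⟩
    obtain ⟨c'', hc''⟩ := hex
    by_cases hx : x ∈ s
    · obtain ⟨q, hq⟩ := sideSum_side.exists_lift c'' hx hx
      have hqc : q.IsCycle := by
        rw [← Walk.map_isCycle_iff_of_injective (f := (Embedding.induce (G := sideSum s G₁ G₂) s).toHom) (Embedding.induce (G := sideSum s G₁ G₂) s).injective, hq]
        exact hc''
      have : ∃ r : G₁.Walk ⟨x, hx⟩ ⟨x, hx⟩, r.IsCycle := by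
        rw [← induce_sideSum₁ (G₁ := G₁) (G₂ := G₂)]
        exact ⟨q, hqc⟩
      obtain ⟨r, hr⟩ := this
      exact hG₁ (c := r) hr
    · obtain ⟨q, hq⟩ := sideSum_side.compl.exists_lift c'' hx hx
      have hqc : q.IsCycle := by
        rw [← Walk.map_isCycle_iff_of_injective (f := (Embedding.induce (G := sideSum s G₁ G₂) (sᶜ)).toHom) (Embedding.induce (G := sideSum s G₁ G₂) (sᶜ)).injective, hq]
        exact hc''
      have : ∃ r : G₂.Walk ⟨x, hx⟩ ⟨x, hx⟩, r.IsCycle := by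
        rw [← induce_sideSum₂ (G₁ := G₁) (G₂ := G₂)]
        exact ⟨q, hqc⟩
      obtain ⟨r, hr⟩ := this
      exact hG₂ (c := r) hr
  


section Fiber
variable {V : Type*} {m : ℕ} {s : Set V} {u v : V}
variable {G₁ : SimpleGraph ↥s} {G₂ : SimpleGraph ↥(sᶜ)}

lemma split_side {T : SimpleGraph V}
    (hS : ∀ w, (T.deleteEdges {s(u, v)}).Reachable u w ↔ w ∈ s) :
    Side (T.deleteEdges {s(u, v)}) s := by
  intro a b hab
  rw [← hS, ← hS]
  exact side_reach _ u hab

lemma split_reach_v {T : SimpleGraph V} (hT : T.IsTree) (huv : T.Adj u v)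
    (hS : ∀ w, (T.deleteEdges {s(u, v)}).Reachable u w ↔ w ∈ s) (w : V) :
    (T.deleteEdges {s(u, v)}).Reachable v w ↔ w ∈ sᶜ := by
  constructor
  · intro h
    intro hw
    exact tree_not_reach hT huv (((hS w).mpr hw).trans h.symm)
  · intro hw
    rcases reach_dichotomy hT.isConnected (u := u) (v := v) w with h | h
    · exact absurd ((hS w).mp h) hw
    · exact h

lemma split_tree₁ {T : SimpleGraph V} (hT : T.IsTree) (hu : u ∈ s)
    (hS : ∀ w, (T.deleteEdges {s(u, v)}).Reachable u w ↔ w ∈ s) :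
    ((T.deleteEdges {s(u, v)}).induce s).IsTree := by
  have hside := split_side hS
  constructor
  · haveI : Nonempty ↥s := ⟨⟨u, hu⟩⟩
    refine ⟨fun a b => ?_⟩
    have hr : (T.deleteEdges {s(u, v)}).Reachable ↑a ↑b :=
      ((hS ↑a).mpr a.2).symm.trans ((hS ↑b).mpr b.2)
    exact (hside.reachable_induce_iff a.2 b.2).mpr hr
  · exact induce_acyclic (acyclic_deleteEdges hT.IsAcyclic _) s

lemma split_tree₂ {T : SimpleGraph V} (hT : T.IsTree) (huv : T.Adj u v) (hv : v ∉ s)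
    (hS : ∀ w, (T.deleteEdges {s(u, v)}).Reachable u w ↔ w ∈ s) :
    ((T.deleteEdges {s(u, v)}).induce (sᶜ)).IsTree := by
  have hside := (split_side hS).compl
  constructor
  · haveI : Nonempty ↥(sᶜ) := ⟨⟨v, hv⟩⟩
    refine ⟨fun a b => ?_⟩
    have hr : (T.deleteEdges {s(u, v)}).Reachable ↑a ↑b :=
      ((split_reach_v hT huv hS ↑a).mpr a.2).symm.trans
        ((split_reach_v hT huv hS ↑b).mpr b.2)
    exact (hside.reachable_induce_iff a.2 b.2).mpr hr
  · exact induce_acyclic (acyclic_deleteEdges hT.IsAcyclic _) (sᶜ)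

lemma split_height₁ {T : SimpleGraph V} (hT : T.IsTree) (hC : IsCentred T m u v) (hu : u ∈ s)
    (hS : ∀ w, (T.deleteEdges {s(u, v)}).Reachable u w ↔ w ∈ s) :
    ∃ x, m - 1 ≤ ((T.deleteEdges {s(u, v)}).induce s).dist ⟨u, hu⟩ x := by
  obtain ⟨⟨a, hra, hda⟩, -⟩ := (isCentred_iff hT hC.1).mp hC
  have ha : a ∈ s := (hS a).mp hra
  refine ⟨⟨a, ha⟩, ?_⟩
  rw [(split_side hS).dist_induce hu ha]
  exact hda

lemma split_height₂ {T : SimpleGraph V} (hT : T.IsTree) (hC : IsCentred T m u v) (hv : v ∉ s)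
    (hS : ∀ w, (T.deleteEdges {s(u, v)}).Reachable u w ↔ w ∈ s) :
    ∃ x, m - 1 ≤ ((T.deleteEdges {s(u, v)}).induce (sᶜ)).dist ⟨v, hv⟩ x := by
  obtain ⟨-, ⟨b, hrb, hdb⟩⟩ := (isCentred_iff hT hC.1).mp hC
  have hb : b ∈ sᶜ := (split_reach_v hT hC.1 hS b).mp hrb
  refine ⟨⟨b, hb⟩, ?_⟩
  rw [(split_side hS).compl.dist_induce (show v ∈ sᶜ from hv) hb]
  exact hdb

lemma glue_isTree (hG₁ : G₁.IsTree) (hG₂ : G₂.IsTree) (hu : u ∈ s) (hv : v ∉ s) :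
    (glue s u v G₁ G₂).IsTree :=
  ⟨glue_connected hG₁.isConnected hG₂.isConnected hu hv,
    glue_acyclic hG₁.IsAcyclic hG₂.IsAcyclic hu hv⟩

lemma glue_reach (hG₁ : G₁.Connected) (hu : u ∈ s) (hv : v ∉ s) (w : V) :
    ((glue s u v G₁ G₂).deleteEdges {s(u, v)}).Reachable u w ↔ w ∈ s := by
  rw [glue_deleteEdges hu hv]
  exact sideSum_reach₁ hG₁ hu w

lemma glue_centred (hG₁ : G₁.IsTree) (hG₂ : G₂.IsTree) (hu : u ∈ s) (hv : v ∉ s)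
    (h₁ : ∃ x, m - 1 ≤ G₁.dist ⟨u, hu⟩ x) (h₂ : ∃ x, m - 1 ≤ G₂.dist ⟨v, hv⟩ x) :
    IsCentred (glue s u v G₁ G₂) m u v := by
  rw [isCentred_iff (glue_isTree hG₁ hG₂ hu hv) (glue_adj_uv hu hv)]
  constructor
  · obtain ⟨x, hx⟩ := h₁
    refine ⟨↑x, (glue_reach hG₁.isConnected hu hv ↑x).mpr x.2, ?_⟩
    rw [glue_deleteEdges hu hv]
    have h1 : ((sideSum s G₁ G₂).induce s).dist ⟨u, hu⟩ x = (sideSum s G₁ G₂).dist u ↑x :=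
      sideSum_side.dist_induce hu x.2
    rw [induce_sideSum₁ (G₁ := G₁) (G₂ := G₂)] at h1
    rw [← h1]
    exact hx
  · obtain ⟨x, hx⟩ := h₂
    have hvc : v ∈ sᶜ := hv
    have hr : ((glue s u v G₁ G₂).deleteEdges {s(u, v)}).Reachable v ↑x := by
      rw [glue_deleteEdges hu hv]
      exact (sideSum_reach₂ hG₂.isConnected hv ↑x).mpr x.2
    refine ⟨↑x, hr, ?_⟩
    rw [glue_deleteEdges hu hv]
    have h1 : ((sideSum s G₁ G₂).induce (sᶜ)).dist ⟨v, hvc⟩ x = (sideSum s G₁ G₂).dist v ↑x :=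
      sideSum_side.compl.dist_induce hvc x.2
    rw [induce_sideSum₂ (G₁ := G₁) (G₂ := G₂)] at h1
    rw [← h1]
    exact hx

lemma glue_split {T : SimpleGraph V} (hT : T.IsTree) (hC : IsCentred T m u v)
    (hu : u ∈ s) (hv : v ∉ s)
    (hS : ∀ w, (T.deleteEdges {s(u, v)}).Reachable u w ↔ w ∈ s) :
    glue s u v ((T.deleteEdges {s(u, v)}).induce s)
      ((T.deleteEdges {s(u, v)}).induce (sᶜ)) = T := by
  have hside := split_side hS
  ext x y
  constructor
  · rintro (h | h)
    · rw [sideSum_adj] at h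
      rcases h with ⟨a, b, hab, rfl, rfl⟩ | ⟨a, b, hab, rfl, rfl⟩
      · exact (T.deleteEdges_le {s(u, v)}) (by exact hab)
      · exact (T.deleteEdges_le {s(u, v)}) (by exact hab)
    · rw [edge_adj] at h
      rcases h.1 with ⟨rfl, rfl⟩ | ⟨rfl, rfl⟩
      · exact hC.1
      · exact hC.1.symm
  · intro hxy
    by_cases he : s(x, y) = s(u, v)
    · rw [Sym2.eq_iff] at he
      refine Or.inr ?_
      rw [edge_adj]
      exact ⟨he, hxy.ne⟩
    · have hH : (T.deleteEdges {s(u, v)}).Adj x y :=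
        deleteEdges_adj.mpr ⟨hxy, by simpa using he⟩
      by_cases hx : x ∈ s
      · have hy : y ∈ s := (hside hH).mp hx
        exact Or.inl (sideSum_adj.mpr (Or.inl ⟨⟨x, hx⟩, ⟨y, hy⟩, by exact hH, rfl, rfl⟩))
      · have hy : y ∈ sᶜ := (hside.compl hH).mp hx
        exact Or.inl (sideSum_adj.mpr (Or.inr ⟨⟨x, hx⟩, ⟨y, hy⟩, by exact hH, rfl, rfl⟩))

lemma split_glue₁ (hu : u ∈ s) (hv : v ∉ s) :
    ((glue s u v G₁ G₂).deleteEdges {s(u, v)}).induce s = G₁ := by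
  rw [glue_deleteEdges hu hv, induce_sideSum₁]

lemma split_glue₂ (hu : u ∈ s) (hv : v ∉ s) :
    ((glue s u v G₁ G₂).deleteEdges {s(u, v)}).induce (sᶜ) = G₂ := by
  rw [glue_deleteEdges hu hv, induce_sideSum₂]

end Fiber

section Counting
variable {V : Type*} [Fintype V] [DecidableEq V] {m : ℕ}

lemma fiber_card (m : ℕ) (s : Set V) [Fintype ↥s] [Fintype ↥(sᶜ)] {u v : V}
    (hu : u ∈ s) (hv : v ∉ s) :
    (univ.filter fun T : SimpleGraph V => T.IsTree ∧ IsCentred T m u v ∧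
        ∀ w, (T.deleteEdges {s(u, v)}).Reachable u w ↔ w ∈ s).card =
    (univ.filter fun H₁ : SimpleGraph ↥s =>
        H₁.IsTree ∧ ∃ x, m - 1 ≤ H₁.dist ⟨u, hu⟩ x).card *
    (univ.filter fun H₂ : SimpleGraph ↥(sᶜ) =>
        H₂.IsTree ∧ ∃ x, m - 1 ≤ H₂.dist ⟨v, hv⟩ x).card := by
  rw [← Finset.card_product]
  refine Finset.card_bij'
    (fun T _ => (((T.deleteEdges {s(u, v)}).induce s), ((T.deleteEdges {s(u, v)}).induce (sᶜ))))
    (fun p _ => glue s u v p.1 p.2) ?_ ?_ ?_ ?_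
  · intro T hT
    rw [Finset.mem_filter] at hT
    obtain ⟨-, h1, h2, h3⟩ := hT
    rw [Finset.mem_product, Finset.mem_filter, Finset.mem_filter]
    exact ⟨⟨Finset.mem_univ _, split_tree₁ h1 hu h3, split_height₁ h1 h2 hu h3⟩,
      ⟨Finset.mem_univ _, split_tree₂ h1 h2.1 hv h3, split_height₂ h1 h2 hv h3⟩⟩
  · intro p hp
    rw [Finset.mem_product, Finset.mem_filter, Finset.mem_filter] at hp
    obtain ⟨⟨-, ht1, hh1⟩, ⟨-, ht2, hh2⟩⟩ := hp
    rw [Finset.mem_filter]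
    exact ⟨Finset.mem_univ _, glue_isTree ht1 ht2 hu hv,
      glue_centred ht1 ht2 hu hv hh1 hh2,
      glue_reach ht1.isConnected hu hv⟩
  · intro T hT
    rw [Finset.mem_filter] at hT
    exact glue_split hT.2.1 hT.2.2.1 hu hv hT.2.2.2
  · intro p hp
    exact Prod.ext (split_glue₁ hu hv) (split_glue₂ hu hv)

lemma filter_tree_card {W : Type*} [Fintype W] [DecidableEq W] (e : V ≃ W) (m : ℕ) (r : V) :
    (univ.filter fun G : SimpleGraph V => G.IsTree ∧ ∃ x, m - 1 ≤ G.dist r x).card =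
    (univ.filter fun G : SimpleGraph W => G.IsTree ∧ ∃ x, m - 1 ≤ G.dist (e r) x).card := by
  refine Finset.card_bij' (fun G _ => G.comap ⇑e.symm) (fun H _ => H.comap ⇑e) ?_ ?_ ?_ ?_
  · intro G hG
    rw [Finset.mem_filter] at hG ⊢
    obtain ⟨-, hT, x, hx⟩ := hG
    let iso : G ≃g G.comap ⇑e.symm := ⟨e, by simp⟩
    refine ⟨Finset.mem_univ _, iso_isTree iso hT, e x, ?_⟩
    have h2 := iso_dist iso r x
    simp only [iso, RelIso.coe_fn_mk] at h2
    rw [h2]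
    exact hx
  · intro H hH
    rw [Finset.mem_filter] at hH ⊢
    obtain ⟨-, hT, x, hx⟩ := hH
    let iso : H ≃g H.comap ⇑e := ⟨e.symm, by simp⟩
    refine ⟨Finset.mem_univ _, iso_isTree iso hT, e.symm x, ?_⟩
    have h2 := iso_dist iso (e r) x
    simp only [iso, RelIso.coe_fn_mk, Equiv.symm_apply_apply] at h2
    rw [h2]
    exact hx
  · intro G _
    ext a b
    simp
  · intro H _
    ext a b
    simp

lemma card_Nm {W : Type*} [Fintype W] [DecidableEq W] (m : ℕ) (r : W) :
    (univ.filter fun G : SimpleGraph W => G.IsTree ∧ ∃ x, m - 1 ≤ G.dist r x).card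
      = Nm m (Fintype.card W) := by
  obtain ⟨k, hk⟩ : ∃ k, Fintype.card W = k + 1 :=
    ⟨Fintype.card W - 1, (Nat.succ_pred_eq_of_pos (Fintype.card_pos_iff.mpr ⟨r⟩)).symm⟩
  have e0 : W ≃ Fin (k + 1) := Fintype.equivFinOfCardEq hk
  let e : W ≃ Fin (k + 1) := e0.trans (Equiv.swap (e0 r) 0)
  have her : e r = 0 := by simp [e, Equiv.swap_apply_left]
  rw [hk, filter_tree_card e m r, her, Nm, Set.ncard_eq_toFinset_card', Set.toFinset_setOf]
  congr 1
  ext G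
  simp

lemma Nm_zero_of_lt {m k : ℕ} (hk : k < m) : Nm m k = 0 := by
  cases k with
  | zero => rfl
  | succ j =>
    have hempty : {G : SimpleGraph (Fin (j + 1)) |
        G.IsTree ∧ ∃ w : Fin (j + 1), m - 1 ≤ G.dist 0 w} = ∅ := by
      ext G
      simp only [Set.mem_setOf_eq, Set.mem_empty_iff_false, iff_false, not_and]
      rintro hT ⟨w, hw⟩
      obtain ⟨p, hp, hl⟩ := exists_path_length_eq_dist (hT.isConnected 0 w)
      have hlt := hp.length_lt
      rw [Fintype.card_fin] at hlt
      omega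
    rw [Nm, hempty, Set.ncard_empty]

end Counting

lemma isCentred_symm {V : Type*} {G : SimpleGraph V} {m : ℕ} {u v : V}
    (h : IsCentred G m u v) : IsCentred G m v u := by
  obtain ⟨hadj, a, b, P, Q, hP, hQ, hPl, hQl, hdisj⟩ := h
  refine ⟨hadj.symm, ?_⟩
  rw [show s(v, u) = s(u, v) from Sym2.eq_swap]
  exact ⟨b, a, Q, P, hQ, hP, hQl, hPl, fun x hx hx' => hdisj x hx' hx⟩

section Assembly
variable {t m : ℕ}

abbrev Xset (t m : ℕ) : Finset (Fin t × Fin t × SimpleGraph (Fin t)) :=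
  univ.filter fun p => p.2.2.IsTree ∧ IsCentred p.2.2 m p.1 p.2.1

lemma two_mul_Mcard (t m : ℕ) : 2 * Mcard t m = (Xset t m).card := by
  have hM : Mcard t m = (univ.filter fun q : Sym2 (Fin t) × SimpleGraph (Fin t) =>
      q.2.IsTree ∧ ∃ u v, q.1 = s(u, v) ∧ IsCentred q.2 m u v).card := by
    rw [Mcard, Set.ncard_eq_toFinset_card', Set.toFinset_setOf]
  set M' := univ.filter fun q : Sym2 (Fin t) × SimpleGraph (Fin t) =>
      q.2.IsTree ∧ ∃ u v, q.1 = s(u, v) ∧ IsCentred q.2 m u v with hM'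
  have hmap : ∀ p ∈ Xset t m, (s(p.1, p.2.1), p.2.2) ∈ M' := by
    intro p hp
    rw [Finset.mem_filter] at hp ⊢
    exact ⟨Finset.mem_univ _, hp.2.1, p.1, p.2.1, rfl, hp.2.2⟩
  rw [Finset.card_eq_sum_card_fiberwise hmap, hM]
  rw [Finset.sum_congr rfl (g := fun _ => 2) ?_, Finset.sum_const, smul_eq_mul, mul_comm]
  intro q hq
  rw [Finset.mem_filter] at hq
  obtain ⟨-, hT, u, v, hq1, hC⟩ := hq
  have hne : u ≠ v := hC.1.ne
  have hfib : (Xset t m).filter (fun p => (s(p.1, p.2.1), p.2.2) = q) =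
      {(u, v, q.2), (v, u, q.2)} := by
    ext p
    rw [Finset.mem_filter, Finset.mem_insert, Finset.mem_singleton]
    constructor
    · rintro ⟨hpX, hpq⟩
      obtain ⟨x, y, T⟩ := p
      rw [Prod.mk.injEq] at hpq
      obtain ⟨h1, h2⟩ := hpq
      simp only at h1 h2
      rw [hq1] at h1
      rw [Sym2.eq_iff] at h1
      rcases h1 with ⟨rfl, rfl⟩ | ⟨rfl, rfl⟩
      · left; rw [h2]
      · right; rw [h2]
    · rintro (rfl | rfl)
      · refine ⟨Finset.mem_filter.mpr ⟨Finset.mem_univ _, hT, hC⟩, ?_⟩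
        rw [Prod.mk.injEq]
        exact ⟨hq1.symm, rfl⟩
      · refine ⟨Finset.mem_filter.mpr ⟨Finset.mem_univ _, hT, isCentred_symm hC⟩, ?_⟩
        rw [Prod.mk.injEq]
        refine ⟨?_, rfl⟩
        rw [hq1, Sym2.eq_swap]
    
  rw [hfib]
  rw [Finset.card_insert_of_notMem, Finset.card_singleton]
  simp only [Finset.mem_singleton, Prod.mk.injEq, not_and]
  intro h
  exact absurd h hne

lemma fiber_ite (m : ℕ) (S : Finset (Fin t)) (u v : Fin t) :
    ((Xset t m).filter fun p =>
        (univ.filter fun w => (p.2.2.deleteEdges {s(p.1, p.2.1)}).Reachable p.1 w, p.1, p.2.1)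
          = (S, u, v)).card =
      if u ∈ S ∧ v ∉ S then Nm m S.card * Nm m (t - S.card) else 0 := by
  by_cases hcase : u ∈ S ∧ v ∉ S
  · obtain ⟨hu, hv⟩ := hcase
    rw [if_pos ⟨hu, hv⟩]
    have hu' : u ∈ (↑S : Set (Fin t)) := hu
    have hv' : v ∉ (↑S : Set (Fin t)) := hv
    rw [show (t : ℕ) - S.card = Fintype.card ↥((↑S : Set (Fin t))ᶜ) from by
        rw [← Set.toFinset_card, Set.toFinset_compl, Finset.toFinset_coe, Finset.card_compl,
          Fintype.card_fin],
      show S.card = Fintype.card ↥(↑S : Set (Fin t)) from by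
        rw [← Set.toFinset_card, Finset.toFinset_coe]]
    refine Eq.trans ?_ ((fiber_card m (↑S : Set (Fin t)) hu' hv').trans
      (by rw [card_Nm, card_Nm]))
    refine Finset.card_bij' (fun p _ => p.2.2) (fun T _ => (u, v, T)) ?_ ?_ ?_ ?_
    · rintro ⟨x, y, T⟩ hp
      simp only [Finset.mem_filter, Finset.mem_univ, true_and, Prod.mk.injEq] at hp
      obtain ⟨⟨hT, hC⟩, hS, h1, h2⟩ := hp
      subst h1
      subst h2
      simp only [Finset.mem_filter, Finset.mem_univ, true_and]
      refine ⟨hT, hC, ?_⟩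
      intro w
      rw [Finset.mem_coe, ← hS]
      simp only [Finset.mem_filter, Finset.mem_univ, true_and]
    · intro T hT
      simp only [Finset.mem_filter, Finset.mem_univ, true_and] at hT
      obtain ⟨h1, h2, h3⟩ := hT
      simp only [Finset.mem_filter, Finset.mem_univ, true_and, Prod.mk.injEq, and_true]
      refine ⟨⟨h1, h2⟩, ?_⟩
      ext w
      simp only [Finset.mem_filter, Finset.mem_univ, true_and]
      exact (h3 w).trans Finset.mem_coe
    · rintro ⟨x, y, T⟩ hp
      simp only [Finset.mem_filter, Prod.mk.injEq] at hp
      obtain ⟨-, -, h1, h2⟩ := hp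
      subst h1
      subst h2
      rfl
    · intro T _
      rfl
  · rw [if_neg hcase, Finset.card_eq_zero, Finset.filter_eq_empty_iff]
    rintro ⟨x, y, T⟩ hp hk
    rw [Finset.mem_filter] at hp
    obtain ⟨-, hT, hC⟩ := hp
    simp only [Prod.mk.injEq] at hk
    obtain ⟨hS, h1, h2⟩ := hk
    subst h1
    subst h2
    refine hcase ⟨?_, ?_⟩
    · rw [← hS]
      simp only [Finset.mem_filter, Finset.mem_univ, true_and]
      exact Reachable.refl x
    · intro hvS
      rw [← hS] at hvS
      simp only [Finset.mem_filter, Finset.mem_univ, true_and] at hvS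
      exact tree_not_reach hT hC.1 hvS

theorem main (t m : ℕ) (hm : 1 ≤ m) (ht : 2 * m ≤ t) :
    2 * Mcard t m =
      ∑ k ∈ Finset.Icc m (t - m), t.choose k * k * (t - k) * Nm m k * Nm m (t - k) := by
  rw [two_mul_Mcard]
  have hmap : ∀ p ∈ Xset t m,
      ((univ.filter fun w => (p.2.2.deleteEdges {s(p.1, p.2.1)}).Reachable p.1 w, p.1, p.2.1) :
        Finset (Fin t) × Fin t × Fin t) ∈ (univ : Finset (Finset (Fin t) × Fin t × Fin t)) :=
    fun _ _ => Finset.mem_univ _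
  rw [Finset.card_eq_sum_card_fiberwise hmap]
  rw [Fintype.sum_prod_type]
  simp only [Fintype.sum_prod_type]
  have step1 : ∀ S : Finset (Fin t),
      (∑ u : Fin t, ∑ v : Fin t, ((Xset t m).filter fun p =>
        (univ.filter fun w => (p.2.2.deleteEdges {s(p.1, p.2.1)}).Reachable p.1 w, p.1, p.2.1)
          = (S, u, v)).card)
      = S.card * ((t - S.card) * (Nm m S.card * Nm m (t - S.card))) := by
    intro S
    rw [Finset.sum_congr rfl (fun u _ => Finset.sum_congr rfl (fun v _ => fiber_ite m S u v))]
    set c := Nm m S.card * Nm m (t - S.card) with hc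
    have h2 : ∀ u : Fin t, (∑ v : Fin t, if u ∈ S ∧ v ∉ S then c else 0)
        = if u ∈ S then (t - S.card) * c else 0 := by
      intro u
      by_cases hu : u ∈ S
      · rw [if_pos hu]
        simp only [hu, true_and]
        rw [Finset.sum_ite, Finset.sum_const, Finset.sum_const_zero, add_zero, smul_eq_mul]
        congr 1
        have hcmp : (univ.filter fun v : Fin t => v ∉ S) = Sᶜ := by
          ext w; simp [Finset.mem_compl]
        rw [hcmp, Finset.card_compl, Fintype.card_fin]
      · rw [if_neg hu]
        simp [hu]
    rw [Finset.sum_congr rfl (fun u _ => h2 u)]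
    rw [Finset.sum_ite, Finset.sum_const, Finset.sum_const_zero, add_zero, smul_eq_mul]
    have hmemS : (univ.filter fun u : Fin t => u ∈ S) = S := by ext w; simp
    rw [hmemS]
  rw [Finset.sum_congr rfl (fun S _ => step1 S)]
  rw [← Finset.powerset_univ, Finset.sum_powerset]
  have step2 : ∀ j ∈ Finset.range ((univ : Finset (Fin t)).card + 1),
      (∑ S ∈ Finset.powersetCard j (univ : Finset (Fin t)),
        S.card * ((t - S.card) * (Nm m S.card * Nm m (t - S.card))))
      = t.choose j * (j * ((t - j) * (Nm m j * Nm m (t - j)))) := by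
    intro j _
    rw [Finset.sum_congr rfl (fun S hS => by
      rw [(Finset.mem_powersetCard_univ.mp hS : S.card = j)])]
    rw [Finset.sum_const, smul_eq_mul, Finset.card_powersetCard, Finset.card_univ,
      Fintype.card_fin]
  rw [Finset.sum_congr rfl step2, Finset.card_univ, Fintype.card_fin]
  have hsub : Finset.Icc m (t - m) ⊆ Finset.range (t + 1) := by
    intro k hk
    rw [Finset.mem_Icc] at hk
    rw [Finset.mem_range]
    omega
  have hzero : ∀ k ∈ Finset.range (t + 1), k ∉ Finset.Icc m (t - m) →
      t.choose k * (k * ((t - k) * (Nm m k * Nm m (t - k)))) = 0 := by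
    intro k hk hnk
    rw [Finset.mem_range] at hk
    rw [Finset.mem_Icc] at hnk
    push_neg at hnk
    by_cases h1 : k < m
    · simp [Nm_zero_of_lt h1]
    · have h2 : t - k < m := by omega
      simp [Nm_zero_of_lt h2]
  rw [← Finset.sum_subset hsub hzero]
  exact Finset.sum_congr rfl (fun k _ => by ring)

end Assembly
end Stmt6Aux

/-- For integers `t ≥ 2m ≥ 2`,
`|M(t,m)| = (1/2) · Σ_{k=m}^{t−m} C(t,k) · k · (t−k) · N_m(k) · N_m(t−k)`. -/
theorem stmt6 (t m : ℕ) (hm : 1 ≤ m) (ht : 2 * m ≤ t) :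
    2 * Mcard t m =
      ∑ k ∈ Finset.Icc m (t - m), t.choose k * k * (t - k) * Nm m k * Nm m (t - k) := by
  exact Stmt6Aux.main t m hm ht

end
end

section
/- For every tree T and every integer m ≥ 1, cov_{3m}(T) ≤ 3 · (the number of m-centred edges of T). -/
open SimpleGraph Finset Real Filter
open scoped Classical

noncomputable section

namespace StmtAux

open SimpleGraph.Walk

variable {V : Type*} {G : SimpleGraph V}

/-- Take the first `n` edges of a walk. -/
def wtake : ∀ {u v : V} (p : G.Walk u v) (n : ℕ), G.Walk u (p.getVert n)
  | _, _, .nil, _ => .nil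
  | _, _, .cons _ _, 0 => .nil
  | _, _, .cons h q, n + 1 => (Walk.cons h (wtake q n)).copy rfl (getVert_cons_succ q h).symm

/-- Drop the first `n` edges of a walk. -/
def wdrop : ∀ {u v : V} (p : G.Walk u v) (n : ℕ), G.Walk (p.getVert n) v
  | _, _, .nil, _ => .nil
  | _, _, .cons h q, 0 => .cons h q
  | _, _, .cons h q, n + 1 => (wdrop q n).copy (getVert_cons_succ q h).symm rfl

lemma support_wtake : ∀ {u v : V} (p : G.Walk u v) (n : ℕ),
    (wtake p n).support = p.support.take (n + 1)
  | _, _, .nil, n => by simp [wtake]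
  | _, _, .cons h q, 0 => by simp [wtake]; rfl
  | _, _, .cons h q, n + 1 => by
      simp [wtake, support_wtake q n]

lemma length_wtake : ∀ {u v : V} (p : G.Walk u v) {n : ℕ}, n ≤ p.length →
    (wtake p n).length = n
  | _, _, .nil, n, hn => by simp_all [wtake]
  | _, _, .cons h q, 0, hn => by simp [wtake]; rfl
  | _, _, .cons h q, n + 1, hn => by
      simp [wtake, length_wtake q (by simpa using hn)]

lemma support_wdrop : ∀ {u v : V} (p : G.Walk u v) {n : ℕ}, n ≤ p.length →
    (wdrop p n).support = p.support.drop n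
  | _, _, .nil, n, hn => by simp_all [wdrop]
  | _, _, .cons h q, 0, hn => by simp [wdrop]; rfl
  | _, _, .cons h q, n + 1, hn => by
      simp [wdrop, support_wdrop q (by simpa using hn)]

lemma length_wdrop : ∀ {u v : V} (p : G.Walk u v) {n : ℕ}, n ≤ p.length →
    (wdrop p n).length = p.length - n
  | _, _, .nil, n, hn => by simp_all [wdrop]
  | _, _, .cons h q, 0, hn => by simp [wdrop]; rfl
  | _, _, .cons h q, n + 1, hn => by
      simp [wdrop, length_wdrop q (by simpa using hn)]

lemma support_getElem? : ∀ {u v : V} (p : G.Walk u v) {n : ℕ}, n ≤ p.length →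
    p.support[n]? = some (p.getVert n)
  | _, _, .nil, n, hn => by
      simp only [Walk.length_nil, Nat.le_zero] at hn
      subst hn
      simp
  | _, _, .cons h q, 0, hn => by simp
  | _, _, .cons h q, n + 1, hn => by
      simpa [getVert_cons_succ] using support_getElem? q (by simpa using hn)

lemma getVert_inj {u v : V} {p : G.Walk u v} (hp : p.IsPath) {i j : ℕ}
    (hi : i ≤ p.length) (hj : j ≤ p.length) (h : p.getVert i = p.getVert j) : i = j := by
  have h1 := support_getElem? p hi
  have h2 := support_getElem? p hj
  refine (List.getElem?_inj (l := p.support) ?_ hp.support_nodup).mp ?_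
  · rw [Walk.length_support]; omega
  · rw [h1, h2, h]

lemma getVert_mem_support {u v : V} (p : G.Walk u v) (n : ℕ) :
    p.getVert n ∈ p.support := by
  rcases le_or_gt n p.length with hn | hn
  · rw [Walk.mem_support_iff_exists_getVert]
    exact ⟨n, rfl, hn⟩
  · rw [p.getVert_of_length_le hn.le]
    exact Walk.end_mem_support p


lemma isCentred_of {m : ℕ} {u v a b : V} (h : G.Adj u v)
    (P : G.Walk u a) (Q : G.Walk v b) (hP : P.IsPath) (hQ : Q.IsPath)
    (hPl : m - 1 ≤ P.length) (hQl : m - 1 ≤ Q.length)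
    (hdisj : ∀ x ∈ P.support, x ∉ Q.support) : IsCentred G m u v := by
  have hvP : v ∉ P.support := fun hv => hdisj v hv Q.start_mem_support
  have huQ : u ∉ Q.support := fun hu => hdisj u P.start_mem_support hu
  have hPe : ∀ e ∈ P.edges, e ∈ (G.deleteEdges {s(u,v)}).edgeSet := by
    intro e he
    rw [SimpleGraph.edgeSet_deleteEdges]
    refine ⟨P.edges_subset_edgeSet he, ?_⟩
    simp only [Set.mem_singleton_iff]
    rintro rfl
    exact hvP (P.snd_mem_support_of_mem_edges he)
  have hQe : ∀ e ∈ Q.edges, e ∈ (G.deleteEdges {s(u,v)}).edgeSet := by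
    intro e he
    rw [SimpleGraph.edgeSet_deleteEdges]
    refine ⟨Q.edges_subset_edgeSet he, ?_⟩
    simp only [Set.mem_singleton_iff]
    rintro rfl
    exact huQ (Q.fst_mem_support_of_mem_edges he)
  refine ⟨h, a, b, P.transfer _ hPe, Q.transfer _ hQe, hP.transfer _, hQ.transfer _,
    ?_, ?_, ?_⟩
  · rwa [Walk.length_transfer]
  · rwa [Walk.length_transfer]
  · simpa [Walk.support_transfer] using hdisj

lemma middle_centred {m : ℕ} (hm : 1 ≤ m) {a b : V} (W : G.Walk a b) (hW : W.IsPath)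
    {i : ℕ} (him : m - 1 ≤ i) (hiW : i + m ≤ W.length) :
    IsCentred G m (W.getVert i) (W.getVert (i + 1)) := by
  have hi1 : i + 1 ≤ W.length := by omega
  have hadj := W.adj_getVert_succ (show i < W.length by omega)
  refine isCentred_of hadj (wtake W i).reverse (wdrop W (i+1)) ?_ ?_ ?_ ?_ ?_
  · rw [Walk.isPath_reverse_iff, Walk.isPath_def, support_wtake]
    exact List.Nodup.sublist (List.take_sublist _ _) hW.support_nodup
  · rw [Walk.isPath_def, support_wdrop W hi1]
    exact List.Nodup.sublist (List.drop_sublist _ _) hW.support_nodup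
  · rw [Walk.length_reverse, length_wtake W (by omega)]; omega
  · rw [length_wdrop W hi1]; omega
  · intro x hx hx'
    rw [Walk.support_reverse, List.mem_reverse, support_wtake] at hx
    rw [support_wdrop W hi1] at hx'
    exact List.disjoint_take_drop hW.support_nodup (le_refl (i+1)) hx hx'

end StmtAux

/-- For every tree `T` and integer `m ≥ 1`,
`cov_{3m}(T) ≤ 3 ·`(number of `m`-centred edges of `T`). -/
theorem stmt7 {V : Type*} [Fintype V] [DecidableEq V] (T : SimpleGraph V) (hT : T.IsTree)
    (m : ℕ) (hm : 1 ≤ m) :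
    cov T (3 * m) ≤ 3 * centredEdgeCount T m := by
  classical
  open StmtAux in
  have key : ∀ P, IsPathSystem T (3 * m) P → coveredCard P ≤ 3 * centredEdgeCount T m := by
    intro P hP
    obtain ⟨hlen, hdisj⟩ := hP
    set S : Set (Sym2 V) := {e : Sym2 V | ∃ u v, e = s(u, v) ∧ IsCentred T m u v} with hS
    have hSc : centredEdgeCount T m = S.toFinset.card := by
      rw [centredEdgeCount, ← Set.ncard_coe_finset, Set.coe_toFinset]
    set E : (Σ u : V, Σ v : V, T.Walk u v) → Finset (Sym2 V) := fun p =>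
      (Finset.Icc (m - 1) (p.2.2.length - m)).image
        (fun i => s(p.2.2.getVert i, p.2.2.getVert (i + 1))) with hE
    -- each E p consists of m-centred edges
    have hEsub : ∀ p ∈ P, E p ⊆ S.toFinset := by
      intro p hp e he
      simp only [hE, Finset.mem_image, Finset.mem_Icc] at he
      obtain ⟨i, ⟨hi1, hi2⟩, rfl⟩ := he
      have h3m : 3 * m ≤ p.2.2.length := (hlen p hp).2
      rw [Set.mem_toFinset]
      exact ⟨_, _, rfl, middle_centred hm p.2.2 (hlen p hp).1 hi1 (by omega)⟩
    -- cardinality of E p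
    have hEcard : ∀ p ∈ P, (E p).card = p.2.2.length + 1 - (2 * m - 1) := by
      intro p hp
      have h3m : 3 * m ≤ p.2.2.length := (hlen p hp).2
      have hpath := (hlen p hp).1
      rw [hE]
      rw [Finset.card_image_of_injOn, Nat.card_Icc]
      · omega
      · intro i hi j hj hij
        simp only [Finset.coe_Icc, Set.mem_Icc] at hi hj
        rw [Sym2.eq_iff] at hij
        rcases hij with ⟨h1, _⟩ | ⟨h1, h2⟩
        · exact getVert_inj hpath (by omega) (by omega) h1
        · have := getVert_inj hpath (by omega) (by omega) h1
          have := getVert_inj hpath (by omega) (by omega) h2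
          omega
    -- E p pairwise disjoint
    have hEdisj : ∀ p ∈ P, ∀ q ∈ P, p ≠ q → Disjoint (E p) (E q) := by
      intro p hp q hq hpq
      rw [Finset.disjoint_left]
      intro e hep heq
      simp only [hE, Finset.mem_image, Finset.mem_Icc] at hep heq
      obtain ⟨i, _, hei⟩ := hep
      obtain ⟨j, _, hej⟩ := heq
      rw [← hej, Sym2.eq_iff] at hei
      have hmemp : ∀ k, p.2.2.getVert k ∈ p.2.2.support := fun k => getVert_mem_support _ _
      have hmemq : ∀ k, q.2.2.getVert k ∈ q.2.2.support := fun k => getVert_mem_support _ _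
      rcases hei with ⟨h1, -⟩ | ⟨h1, -⟩
      · exact hdisj p hp q hq hpq _ (hmemp i) (by rw [h1]; exact hmemq j)
      · exact hdisj p hp q hq hpq _ (hmemp i) (by rw [h1]; exact hmemq (j + 1))
    -- lower bound on centred edges
    have hlow : ∑ p ∈ P, (p.2.2.length + 1 - (2 * m - 1)) ≤ centredEdgeCount T m := by
      rw [hSc]
      calc ∑ p ∈ P, (p.2.2.length + 1 - (2 * m - 1))
          = ∑ p ∈ P.attach, (E p.1).card := by
            rw [Finset.sum_attach P fun p => (E p).card]
            exact Finset.sum_congr rfl fun p hp => (hEcard p hp).symm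
        _ = (P.biUnion E).card := by
            rw [Finset.card_biUnion (fun p hp q hq h => hEdisj p hp q hq h)]
            rw [Finset.sum_attach P fun p => (E p).card]
        _ ≤ S.toFinset.card := by
            apply Finset.card_le_card
            intro e he
            rw [Finset.mem_biUnion] at he
            obtain ⟨p, hp, hep⟩ := he
            exact hEsub p hp hep
    -- upper bound on covered vertices
    have hcov : coveredCard P ≤ ∑ p ∈ P, (p.2.2.length + 1) := by
      refine (Finset.card_biUnion_le).trans (Finset.sum_le_sum fun p hp => ?_)
      calc p.2.2.support.toFinset.card ≤ p.2.2.support.length := List.toFinset_card_le _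
        _ = p.2.2.length + 1 := p.2.2.length_support
    -- combine
    calc coveredCard P ≤ ∑ p ∈ P, (p.2.2.length + 1) := hcov
      _ ≤ ∑ p ∈ P, 3 * (p.2.2.length + 1 - (2 * m - 1)) := by
          refine Finset.sum_le_sum fun p hp => ?_
          have h3m : 3 * m ≤ p.2.2.length := (hlen p hp).2
          omega
      _ = 3 * ∑ p ∈ P, (p.2.2.length + 1 - (2 * m - 1)) := by rw [Finset.mul_sum]
      _ ≤ 3 * centredEdgeCount T m := by omega
  rw [cov]
  apply csSup_le
  · exact ⟨0, ∅, ⟨by simp, by simp⟩, by simp [coveredCard]⟩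
  · rintro n ⟨P, hP, rfl⟩
    exact key P hP

end
end

section
/- Let ℓ ≥ 1 be an integer and let G and G' be two graphs on the same vertex set whose edge sets differ in exactly one edge. Then |cov_ℓ(G) − cov_ℓ(G')| ≤ 2ℓ. -/
open SimpleGraph Finset Real Filter
open scoped Classical

noncomputable section

lemma splitAtEdge {V : Type*} {H : SimpleGraph V} {e : Sym2 V} :
    ∀ {a b : V} (w : H.Walk a b), w.IsPath → e ∈ w.edges →
    ∃ (c d : V) (w1 : (H.deleteEdges {e}).Walk a c) (w2 : (H.deleteEdges {e}).Walk d b),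
      w1.IsPath ∧ w2.IsPath ∧ (∀ x, x ∈ w.support ↔ x ∈ w1.support ∨ x ∈ w2.support) ∧
      (∀ x ∈ w1.support, x ∉ w2.support) ∧ w1.length + w2.length + 1 = w.length := by
  intro a b w
  induction w with
  | nil => intro _ he; simp at he
  | cons h w' ih =>
    rename_i u v b'
    intro hw he
    have ht := hw.isTrail.edges_nodup
    rw [SimpleGraph.Walk.cons_isPath_iff] at hw
    rw [SimpleGraph.Walk.edges_cons, List.nodup_cons] at ht
    by_cases hc : s(u, v) = e
    · have hne : e ∉ w'.edges := hc ▸ ht.1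
      have hsub : ∀ f ∈ w'.edges, f ∈ (H.deleteEdges {e}).edgeSet := by
        intro f hf
        rw [SimpleGraph.edgeSet_deleteEdges]
        exact ⟨w'.edges_subset_edgeSet hf, by
          simp only [Set.mem_singleton_iff]; rintro rfl; exact hne hf⟩
      refine ⟨u, v, SimpleGraph.Walk.nil, w'.transfer _ hsub, SimpleGraph.Walk.IsPath.nil,
        hw.1.transfer _, ?_, ?_, ?_⟩
      · intro x
        simp [SimpleGraph.Walk.support_transfer]
      · intro x hx
        simp only [SimpleGraph.Walk.support_nil, List.mem_singleton] at hx
        subst hx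
        rw [SimpleGraph.Walk.support_transfer]
        exact hw.2
      · simp
    · have he' : e ∈ w'.edges := by
        rw [SimpleGraph.Walk.edges_cons, List.mem_cons] at he
        tauto
      obtain ⟨c, d, w1', w2', hp1, hp2, hiff, hdisj, hlen⟩ := ih hw.1 he'
      have h' : (H.deleteEdges {e}).Adj u v := by
        rw [SimpleGraph.deleteEdges_adj]
        exact ⟨h, by simpa using hc⟩
      refine ⟨c, d, SimpleGraph.Walk.cons h' w1', w2', ?_, hp2, ?_, ?_, ?_⟩
      · rw [SimpleGraph.Walk.cons_isPath_iff]
        exact ⟨hp1, fun hm => hw.2 ((hiff u).2 (Or.inl hm))⟩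
      · intro x
        simp only [SimpleGraph.Walk.support_cons, List.mem_cons]
        rw [hiff x]
        tauto
      · intro x hx
        simp only [SimpleGraph.Walk.support_cons, List.mem_cons] at hx
        rcases hx with rfl | hx
        · exact fun hm => hw.2 ((hiff x).2 (Or.inr hm))
        · exact hdisj x hx
      · simp only [SimpleGraph.Walk.length_cons]
        omega


lemma pieces {V : Type*} [DecidableEq V] {H : SimpleGraph V} {e : Sym2 V} (ℓ : ℕ)
    {a b : V} (w : H.Walk a b) (hw : w.IsPath) (hlen : ℓ ≤ w.length) :
    ∃ Q : Finset (Σ u : V, Σ v : V, (H.deleteEdges {e}).Walk u v),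
      (∀ q ∈ Q, q.2.2.IsPath ∧ ℓ ≤ q.2.2.length) ∧
      (∀ q ∈ Q, ∀ x ∈ q.2.2.support, x ∈ w.support) ∧
      (∀ q ∈ Q, ∀ q' ∈ Q, q ≠ q' → ∀ x ∈ q.2.2.support, x ∉ q'.2.2.support) ∧
      w.support.toFinset.card ≤ ((Q.biUnion fun q => q.2.2.support.toFinset).card +
        if e ∈ w.edges then 2 * ℓ else 0) := by
  by_cases he : e ∈ w.edges
  · obtain ⟨c, d, w1, w2, hp1, hp2, hiff, hdisj, hlen12⟩ := splitAtEdge w hw he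
    set q1 : (Σ u : V, Σ v : V, (H.deleteEdges {e}).Walk u v) := ⟨a, c, w1⟩ with hq1
    set q2 : (Σ u : V, Σ v : V, (H.deleteEdges {e}).Walk u v) := ⟨d, b, w2⟩ with hq2
    set Q := (if ℓ ≤ w1.length then ({q1} : Finset _) else ∅) ∪
      (if ℓ ≤ w2.length then ({q2} : Finset _) else ∅) with hQdef
    have hmem : ∀ q, q ∈ Q ↔ (ℓ ≤ w1.length ∧ q = q1) ∨ (ℓ ≤ w2.length ∧ q = q2) := by
      intro q
      by_cases h1 : ℓ ≤ w1.length <;> by_cases h2 : ℓ ≤ w2.length <;>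
        simp [hQdef, h1, h2]
    refine ⟨Q, ?_, ?_, ?_, ?_⟩
    · intro q hq
      rcases (hmem q).1 hq with ⟨h1, rfl⟩ | ⟨h2, rfl⟩
      · exact ⟨hp1, h1⟩
      · exact ⟨hp2, h2⟩
    · intro q hq x hx
      rcases (hmem q).1 hq with ⟨h1, rfl⟩ | ⟨h2, rfl⟩
      · exact (hiff x).2 (Or.inl hx)
      · exact (hiff x).2 (Or.inr hx)
    · intro q hq q' hq' hne x hx
      rcases (hmem q).1 hq with ⟨h1, rfl⟩ | ⟨h2, rfl⟩ <;>
        rcases (hmem q').1 hq' with ⟨h1', rfl⟩ | ⟨h2', rfl⟩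
      · exact absurd rfl hne
      · exact hdisj x hx
      · exact fun hx' => hdisj x hx' hx
      · exact absurd rfl hne
    · rw [if_pos he]
      have huni : w.support.toFinset = w1.support.toFinset ∪ w2.support.toFinset := by
        ext x
        simp only [List.mem_toFinset, Finset.mem_union]
        exact hiff x
      have hdisjF : Disjoint w1.support.toFinset w2.support.toFinset := by
        rw [Finset.disjoint_left]
        intro x hx hx'
        rw [List.mem_toFinset] at hx hx'
        exact hdisj x hx hx'
      have hcards : w.support.toFinset.card =
          w1.support.toFinset.card + w2.support.toFinset.card := by
        rw [huni, Finset.card_union_of_disjoint hdisjF]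
      have hc1 : w1.support.toFinset.card = w1.length + 1 := by
        rw [List.toFinset_card_of_nodup hp1.support_nodup, SimpleGraph.Walk.length_support]
      have hc2 : w2.support.toFinset.card = w2.length + 1 := by
        rw [List.toFinset_card_of_nodup hp2.support_nodup, SimpleGraph.Walk.length_support]
      have hsub1 : ℓ ≤ w1.length →
          w1.support.toFinset ⊆ Q.biUnion fun q => q.2.2.support.toFinset := by
        intro h1 x hx
        exact Finset.mem_biUnion.2 ⟨q1, (hmem q1).2 (Or.inl ⟨h1, rfl⟩), hx⟩
      have hsub2 : ℓ ≤ w2.length →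
          w2.support.toFinset ⊆ Q.biUnion fun q => q.2.2.support.toFinset := by
        intro h2 x hx
        exact Finset.mem_biUnion.2 ⟨q2, (hmem q2).2 (Or.inr ⟨h2, rfl⟩), hx⟩
      by_cases h1 : ℓ ≤ w1.length <;> by_cases h2 : ℓ ≤ w2.length
      · have : w.support.toFinset ⊆ Q.biUnion fun q => q.2.2.support.toFinset := by
          rw [huni]
          exact Finset.union_subset (hsub1 h1) (hsub2 h2)
        have := Finset.card_le_card this
        omega
      · have := Finset.card_le_card (hsub1 h1)
        omega
      · have := Finset.card_le_card (hsub2 h2)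
        omega
      · omega
  · have hsub : ∀ f ∈ w.edges, f ∈ (H.deleteEdges {e}).edgeSet := by
      intro f hf
      rw [SimpleGraph.edgeSet_deleteEdges]
      exact ⟨w.edges_subset_edgeSet hf, by
        simp only [Set.mem_singleton_iff]; rintro rfl; exact he hf⟩
    refine ⟨{⟨a, b, w.transfer _ hsub⟩}, ?_, ?_, ?_, ?_⟩
    · intro q hq
      rw [Finset.mem_singleton] at hq
      subst hq
      exact ⟨hw.transfer _, by rw [SimpleGraph.Walk.length_transfer]; exact hlen⟩
    · intro q hq x hx
      rw [Finset.mem_singleton] at hq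
      subst hq
      rwa [SimpleGraph.Walk.support_transfer] at hx
    · intro q hq q' hq' hne
      rw [Finset.mem_singleton] at hq hq'
      exact absurd (hq.trans hq'.symm) hne
    · rw [if_neg he, Finset.singleton_biUnion]
      simp [SimpleGraph.Walk.support_transfer]

lemma covSet_bddAbove {V : Type*} [Fintype V] [DecidableEq V] (G : SimpleGraph V) (ℓ : ℕ) :
    BddAbove {n | ∃ P, IsPathSystem G ℓ P ∧ n = coveredCard P} := by
  refine ⟨Fintype.card V, ?_⟩
  rintro n ⟨P, _, rfl⟩
  calc coveredCard P ≤ Finset.univ.card := Finset.card_le_univ _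
  _ = Fintype.card V := Finset.card_univ

lemma le_cov {V : Type*} [Fintype V] [DecidableEq V] {G : SimpleGraph V} {ℓ : ℕ}
    (P : Finset (Σ u : V, Σ v : V, G.Walk u v)) (hP : IsPathSystem G ℓ P) :
    coveredCard P ≤ cov G ℓ :=
  le_csSup (covSet_bddAbove G ℓ) ⟨P, hP, rfl⟩

lemma cov_spec {V : Type*} [Fintype V] [DecidableEq V] (G : SimpleGraph V) (ℓ : ℕ) :
    ∃ P, IsPathSystem G ℓ P ∧ cov G ℓ = coveredCard P := by
  have h0 : (0 : ℕ) ∈ {n | ∃ P, IsPathSystem G ℓ P ∧ n = coveredCard P} :=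
    ⟨∅, ⟨fun p hp => absurd hp (Finset.notMem_empty p),
      fun p hp => absurd hp (Finset.notMem_empty p)⟩, by simp [coveredCard]⟩
  exact Nat.sSup_mem ⟨0, h0⟩ (covSet_bddAbove G ℓ)

lemma cov_mono {V : Type*} [Fintype V] [DecidableEq V] {G H : SimpleGraph V}
    (hGH : G ≤ H) (ℓ : ℕ) : cov G ℓ ≤ cov H ℓ := by
  obtain ⟨P, hP, hcov⟩ := cov_spec G ℓ
  set f : (Σ u : V, Σ v : V, G.Walk u v) → (Σ u : V, Σ v : V, H.Walk u v) :=
    fun p => ⟨p.1, p.2.1, p.2.2.transfer H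
      (fun g hg => SimpleGraph.edgeSet_mono hGH (p.2.2.edges_subset_edgeSet hg))⟩ with hf
  have hsupp : ∀ p, (f p).2.2.support = p.2.2.support := fun p =>
    SimpleGraph.Walk.support_transfer _ _
  have hsys : IsPathSystem H ℓ (P.image f) := by
    constructor
    · intro q hq
      obtain ⟨p, hp, rfl⟩ := Finset.mem_image.1 hq
      obtain ⟨h1, h2⟩ := hP.1 p hp
      exact ⟨h1.transfer _, by
        show ℓ ≤ (p.2.2.transfer H _).length
        rwa [SimpleGraph.Walk.length_transfer]⟩
    · intro q hq q' hq' hne x hx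
      obtain ⟨p, hp, rfl⟩ := Finset.mem_image.1 hq
      obtain ⟨p', hp', rfl⟩ := Finset.mem_image.1 hq'
      have hpp : p ≠ p' := fun h => hne (h ▸ rfl)
      rw [hsupp] at hx ⊢
      exact hP.2 p hp p' hp' hpp x hx
  have hcard : coveredCard (P.image f) = coveredCard P := by
    unfold coveredCard
    rw [Finset.image_biUnion]
    congr 1
    apply Finset.biUnion_congr rfl
    intro p _
    rw [hsupp]
  rw [hcov, ← hcard]
  exact le_cov _ hsys

lemma cov_del {V : Type*} [Fintype V] [DecidableEq V] (H : SimpleGraph V) (e : Sym2 V) (ℓ : ℕ) :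
    cov H ℓ ≤ cov (H.deleteEdges {e}) ℓ + 2 * ℓ := by
  induction e using Sym2.ind with
  | _ u0 v0 =>
  obtain ⟨P, hP, hcov⟩ := cov_spec H ℓ
  have hex : ∀ p : {p // p ∈ P},
      ∃ Q : Finset (Σ u : V, Σ v : V, (H.deleteEdges {s(u0, v0)}).Walk u v),
        (∀ q ∈ Q, q.2.2.IsPath ∧ ℓ ≤ q.2.2.length) ∧
        (∀ q ∈ Q, ∀ x ∈ q.2.2.support, x ∈ p.1.2.2.support) ∧
        (∀ q ∈ Q, ∀ q' ∈ Q, q ≠ q' → ∀ x ∈ q.2.2.support, x ∉ q'.2.2.support) ∧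
        p.1.2.2.support.toFinset.card ≤ ((Q.biUnion fun q => q.2.2.support.toFinset).card +
          if s(u0, v0) ∈ p.1.2.2.edges then 2 * ℓ else 0) :=
    fun p => pieces ℓ p.1.2.2 (hP.1 p.1 p.2).1 (hP.1 p.1 p.2).2
  choose Q hQ1 hQ2 hQ3 hQ4 using hex
  set P' := P.attach.biUnion Q with hP'def
  have hsys : IsPathSystem (H.deleteEdges {s(u0, v0)}) ℓ P' := by
    constructor
    · intro q hq
      obtain ⟨p, hp, hq⟩ := Finset.mem_biUnion.1 hq
      exact hQ1 p q hq
    · intro q hq q' hq' hne x hx hx'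
      obtain ⟨p, hp, hq⟩ := Finset.mem_biUnion.1 hq
      obtain ⟨p', hp', hq'2⟩ := Finset.mem_biUnion.1 hq'
      by_cases hpp : p = p'
      · subst hpp
        exact hQ3 p q hq q' hq'2 hne x hx hx'
      · exact hP.2 p.1 p.2 p'.1 p'.2 (fun h => hpp (Subtype.ext h)) x
          (hQ2 p q hq x hx) (hQ2 p' q' hq'2 x hx')
  have h1 : coveredCard P = ∑ p ∈ P.attach, p.1.2.2.support.toFinset.card := by
    unfold coveredCard
    rw [Finset.card_biUnion (fun p hp p' hp' hne => by
      simp only [Function.onFun]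
      rw [Finset.disjoint_left]
      intro x hx hx'
      rw [List.mem_toFinset] at hx hx'
      exact hP.2 p hp p' hp' hne x hx hx')]
    exact (Finset.sum_attach P _).symm
  have h2 : coveredCard P' =
      ∑ p ∈ P.attach, ((Q p).biUnion fun q => q.2.2.support.toFinset).card := by
    unfold coveredCard
    rw [hP'def, Finset.biUnion_biUnion]
    refine Finset.card_biUnion ?_
    intro p _ p' _ hne
    simp only [Function.onFun]
    rw [Finset.disjoint_left]
    intro x hx hx'
    obtain ⟨q, hq, hxq⟩ := Finset.mem_biUnion.1 hx
    obtain ⟨q', hq', hxq'⟩ := Finset.mem_biUnion.1 hx'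
    rw [List.mem_toFinset] at hxq hxq'
    exact hP.2 p.1 p.2 p'.1 p'.2 (fun h => hne (Subtype.ext h)) x
      (hQ2 p q hq x hxq) (hQ2 p' q' hq' x hxq')
  have h3 : ∑ p ∈ P.attach, (if s(u0, v0) ∈ p.1.2.2.edges then 2 * ℓ else 0) ≤ 2 * ℓ := by
    rw [← Finset.sum_filter]
    have hcard1 : (P.attach.filter fun p => s(u0, v0) ∈ p.1.2.2.edges).card ≤ 1 := by
      rw [Finset.card_le_one]
      intro p hp p' hp'
      rw [Finset.mem_filter] at hp hp'
      by_contra hne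
      have hu1 := SimpleGraph.Walk.fst_mem_support_of_mem_edges _ hp.2
      have hu2 := SimpleGraph.Walk.fst_mem_support_of_mem_edges _ hp'.2
      exact hP.2 p.1 p.2 p'.1 p'.2 (fun h => hne (Subtype.ext h)) u0 hu1 hu2
    rw [Finset.sum_const, smul_eq_mul]
    calc _ ≤ 1 * (2 * ℓ) := Nat.mul_le_mul_right _ hcard1
      _ = 2 * ℓ := one_mul _
  have hle := le_cov P' hsys
  calc cov H ℓ = coveredCard P := hcov
    _ = ∑ p ∈ P.attach, p.1.2.2.support.toFinset.card := h1
    _ ≤ ∑ p ∈ P.attach, (((Q p).biUnion fun q => q.2.2.support.toFinset).card +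
        if s(u0, v0) ∈ p.1.2.2.edges then 2 * ℓ else 0) :=
      Finset.sum_le_sum (fun p _ => hQ4 p)
    _ = (∑ p ∈ P.attach, ((Q p).biUnion fun q => q.2.2.support.toFinset).card) +
        ∑ p ∈ P.attach, (if s(u0, v0) ∈ p.1.2.2.edges then 2 * ℓ else 0) :=
      Finset.sum_add_distrib
    _ ≤ coveredCard P' + 2 * ℓ := by rw [h2]; exact Nat.add_le_add_left h3 _
    _ ≤ cov (H.deleteEdges {s(u0, v0)}) ℓ + 2 * ℓ := Nat.add_le_add_right hle _


/-- If `G` and `G'` are graphs on the same vertex set whose edge sets differ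
in exactly one edge, then `|cov_ℓ(G) − cov_ℓ(G')| ≤ 2ℓ` for every integer `ℓ ≥ 1`. -/
theorem stmt13 {V : Type*} [Fintype V] [DecidableEq V] (ℓ : ℕ) (hℓ : 1 ≤ ℓ)
    (G G' : SimpleGraph V) (h : ∃ e : Sym2 V, symmDiff G.edgeSet G'.edgeSet = {e}) :
    |(cov G ℓ : ℤ) - (cov G' ℓ : ℤ)| ≤ 2 * ℓ := by
  obtain ⟨e, he⟩ := h
  have hmemiff : ∀ f : Sym2 V, (f ∈ G.edgeSet ∧ f ∉ G'.edgeSet) ∨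
      (f ∈ G'.edgeSet ∧ f ∉ G.edgeSet) ↔ f = e := by
    intro f
    rw [← Set.mem_symmDiff, he, Set.mem_singleton_iff]
  have hkey : G' = G.deleteEdges {e} ∨ G = G'.deleteEdges {e} := by
    have hee : (e ∈ G.edgeSet ∧ e ∉ G'.edgeSet) ∨ (e ∈ G'.edgeSet ∧ e ∉ G.edgeSet) :=
      (hmemiff e).2 rfl
    rcases hee with ⟨heG, heG'⟩ | ⟨heG', heG⟩
    · left
      rw [← SimpleGraph.edgeSet_inj, SimpleGraph.edgeSet_deleteEdges]
      ext f
      constructor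
      · intro hf
        refine ⟨?_, ?_⟩
        · by_contra hfG
          have := (hmemiff f).1 (Or.inr ⟨hf, hfG⟩)
          subst this
          exact heG' hf
        · simp only [Set.mem_singleton_iff]
          rintro rfl
          exact heG' hf
      · rintro ⟨hfG, hfe⟩
        by_contra hfG'
        have := (hmemiff f).1 (Or.inl ⟨hfG, hfG'⟩)
        exact hfe this
    · right
      rw [← SimpleGraph.edgeSet_inj, SimpleGraph.edgeSet_deleteEdges]
      ext f
      constructor
      · intro hf
        refine ⟨?_, ?_⟩
        · by_contra hfG'
          have := (hmemiff f).1 (Or.inl ⟨hf, hfG'⟩)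
          subst this
          exact heG hf
        · simp only [Set.mem_singleton_iff]
          rintro rfl
          exact heG hf
      · rintro ⟨hfG', hfe⟩
        by_contra hfG
        have := (hmemiff f).1 (Or.inr ⟨hfG', hfG⟩)
        exact hfe this
  rw [abs_sub_le_iff]
  rcases hkey with hk | hk
  · have hmono : cov G' ℓ ≤ cov G ℓ := by
      rw [hk]; exact cov_mono (SimpleGraph.deleteEdges_le _) ℓ
    have hdel : cov G ℓ ≤ cov G' ℓ + 2 * ℓ := by
      rw [hk]; exact cov_del G e ℓ
    constructor <;> [skip; skip] <;> push_cast <;> omega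
  · have hmono : cov G ℓ ≤ cov G' ℓ := by
      rw [hk]; exact cov_mono (SimpleGraph.deleteEdges_le _) ℓ
    have hdel : cov G' ℓ ≤ cov G ℓ + 2 * ℓ := by
      rw [hk]; exact cov_del G' e ℓ
    constructor <;> push_cast <;> omega

end
end

section
/- Let n ≥ 1, let p ∈ (0,1), let m < t ≤ n be positive integers, and let S ⊆ {1,…,n} with |S| = t. For G ~ G(n,p), define the random variable X_S as follows: if the induced subgraph G[S] is connected and G has no edges between S and its complement, then X_S is the number of m-centred edges of G[S]; otherwise X_S = 0. Then E[X_S] ≤ |M(t,m)| · p^{t−1} · (1−p)^{t(n−t)}. -/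
open SimpleGraph Finset Real Filter
open scoped Classical

noncomputable section

namespace Stmt15Aux

variable {V : Type*}

lemma eq_of_isolated {G : SimpleGraph V} {x y : V}
    (hx : ∀ z, ¬ G.Adj x z) (h : G.Reachable x y) : x = y := by
  obtain ⟨w⟩ := h
  cases w with
  | nil => rfl
  | cons h' _ => exact absurd h' (hx _)

lemma isAcyclic_sup_edge {G : SimpleGraph V} (hG : G.IsAcyclic) {a b : V}
    (hab : a ≠ b) (hr : ¬ G.Reachable a b) : (G ⊔ SimpleGraph.edge a b).IsAcyclic := by
  have hbr : (G ⊔ SimpleGraph.edge a b).IsBridge s(a, b) := by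
    rw [SimpleGraph.isBridge_iff]
    intro hre
    apply hr
    refine hre.mono ?_
    intro x y hxy
    rw [deleteEdges_adj] at hxy
    obtain ⟨hxy1, hxy2⟩ := hxy
    rcases (sup_adj _ _ _ _).mp hxy1 with h1 | h1
    · exact h1
    · exfalso
      apply hxy2
      rw [SimpleGraph.edge_adj] at h1
      rw [Set.mem_singleton_iff]
      rcases h1.1 with ⟨rfl, rfl⟩ | ⟨rfl, rfl⟩
      · rfl
      · exact Sym2.eq_swap
  intro v c hc
  by_cases he : s(a, b) ∈ c.edges
  · exact hbr.notMem_edges_of_isCycle hc he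
  · have hsub : ∀ e ∈ c.edges, e ∈ G.edgeSet := by
      intro e hce
      have := c.edges_subset_edgeSet hce
      rw [edgeSet_sup] at this
      rcases this with h1 | h1
      · exact h1
      · exfalso
        rw [SimpleGraph.edge, edgeSet_fromEdgeSet] at h1
        obtain ⟨h1, -⟩ := h1
        simp only [Set.mem_singleton_iff] at h1
        exact he (h1 ▸ hce)
    exact hG (c.transfer G hsub) (hc.transfer hsub)

lemma exists_boundary {G T : SimpleGraph V} {x y : V} (w : G.Walk x y)
    (h : ¬ T.Reachable x y) : ∃ a b, G.Adj a b ∧ ¬ T.Reachable a b := by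
  induction w with
  | nil => exact absurd (Reachable.refl _) h
  | @cons u c y hadj w ih =>
    by_cases hr : T.Reachable u c
    · exact ih (fun h2 => h (hr.trans h2))
    · exact ⟨_, _, hadj, hr⟩

lemma exists_tree_le [Fintype V] {G H : SimpleGraph V} (hG : G.Connected)
    (hH : H ≤ G) (hHa : H.IsAcyclic) : ∃ T, H ≤ T ∧ T ≤ G ∧ T.IsTree := by
  classical
  set cand : Finset (SimpleGraph V) :=
    Finset.univ.filter (fun K => H ≤ K ∧ K ≤ G ∧ K.IsAcyclic) with hcand
  have hne : cand.Nonempty := ⟨H, by simp [hcand, hH, hHa]⟩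
  obtain ⟨T, hTmem, hTmax⟩ := cand.exists_max_image (fun K => K.edgeSet.ncard) hne
  rw [hcand, Finset.mem_filter] at hTmem
  obtain ⟨-, hHT, hTG, hTa⟩ := hTmem
  refine ⟨T, hHT, hTG, ?_, hTa⟩
  have hnv : Nonempty V := hG.nonempty
  constructor
  · intro x y
    by_contra hxy
    obtain ⟨a, b, hadj, hr⟩ := exists_boundary ((hG.preconnected x y).some) hxy
    have hne' : a ≠ b := hadj.ne
    set T' := T ⊔ SimpleGraph.edge a b with hT'
    have hT'a : T'.IsAcyclic := isAcyclic_sup_edge hTa hne' hr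
    have hT'G : T' ≤ G := sup_le hTG (by
      intro p q hpq
      rw [SimpleGraph.edge_adj] at hpq
      rcases hpq.1 with ⟨rfl, rfl⟩ | ⟨rfl, rfl⟩
      · exact hadj
      · exact hadj.symm)
    have hT'mem : T' ∈ cand := by
      rw [hcand, Finset.mem_filter]
      exact ⟨Finset.mem_univ _, le_trans hHT le_sup_left, hT'G, hT'a⟩
    have hlt : T < T' := by
      refine lt_of_le_of_ne le_sup_left ?_
      intro hEq
      have : T'.Adj a b := by
        rw [hT', sup_adj, SimpleGraph.edge_adj]
        exact Or.inr ⟨Or.inl ⟨rfl, rfl⟩, hne'⟩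
      rw [← hEq] at this
      exact hr this.reachable
    have := hTmax T' hT'mem
    have hcardlt : T.edgeSet.ncard < T'.edgeSet.ncard :=
      Set.ncard_lt_ncard (SimpleGraph.edgeSet_ssubset_edgeSet.mpr hlt) (Set.toFinite _)
    omega

lemma isAcyclic_walkGraph {G : SimpleGraph V} {x y : V} (w : G.Walk x y) (hw : w.IsPath) :
    (SimpleGraph.fromEdgeSet {e | e ∈ w.edges}).IsAcyclic := by
  induction w with
  | nil => simp
  | @cons u c y hadj p ih =>
    rw [Walk.cons_isPath_iff] at hw
    have hrw : {e : Sym2 V | e ∈ (Walk.cons hadj p).edges}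
        = {e | e ∈ p.edges} ∪ {s(u, c)} := by
      ext e
      simp only [Walk.edges_cons, List.mem_cons, Set.mem_union, Set.mem_setOf_eq,
        Set.mem_singleton_iff]
      tauto
    rw [hrw, fromEdgeSet_union]
    have hiso : ∀ z, ¬ (SimpleGraph.fromEdgeSet {e | e ∈ p.edges}).Adj u z := by
      intro z hz
      rw [fromEdgeSet_adj] at hz
      exact hw.2 (p.fst_mem_support_of_mem_edges hz.1)
    have hnr : ¬ (SimpleGraph.fromEdgeSet {e : Sym2 V | e ∈ p.edges}).Reachable u c := by
      intro hre
      exact hadj.ne (eq_of_isolated hiso hre)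
    exact isAcyclic_sup_edge (ih hw.1) hadj.ne hnr

end Stmt15Aux


namespace Stmt15Aux

lemma IsCentred.map_iso {V W : Type*} {G : SimpleGraph V} {H : SimpleGraph W} (φ : G ≃g H)
    {m : ℕ} {u v : V} (h : IsCentred G m u v) : IsCentred H m (φ u) (φ v) := by
  obtain ⟨hadj, a, b, P, Q, hP, hQ, hlP, hlQ, hdisj⟩ := h
  have hinj : Function.Injective (φ : V → W) := φ.toEquiv.injective
  refine ⟨(φ.map_adj_iff).mpr hadj, φ a, φ b, ?_⟩
  have hmr : ∀ {x y : V}, (G.deleteEdges {s(u, v)}).Adj x y →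
      (H.deleteEdges {s(φ u, φ v)}).Adj (φ x) (φ y) := by
    intro x y hxy
    rw [deleteEdges_adj] at hxy ⊢
    refine ⟨(φ.map_adj_iff).mpr hxy.1, ?_⟩
    intro hmem
    apply hxy.2
    simp only [Set.mem_singleton_iff] at hmem ⊢
    have : Sym2.map (φ : V → W) s(x, y) = Sym2.map (φ : V → W) s(u, v) := by
      simpa using hmem
    exact Sym2.map.injective hinj this
  let ψ : (G.deleteEdges {s(u, v)}) →g (H.deleteEdges {s(φ u, φ v)}) := ⟨(φ : V → W), hmr⟩
  refine ⟨P.map ψ, Q.map ψ, Walk.map_isPath_of_injective hinj hP,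
    Walk.map_isPath_of_injective hinj hQ, ?_, ?_, ?_⟩
  · rwa [Walk.length_map]
  · rwa [Walk.length_map]
  · intro x hxp hxq
    rw [Walk.support_map, List.mem_map] at hxp hxq
    obtain ⟨x₀, hx₀, rfl⟩ := hxp
    obtain ⟨x₁, hx₁, hEq⟩ := hxq
    exact hdisj x₀ hx₀ (hinj hEq ▸ hx₁)

end Stmt15Aux


namespace Stmt15Aux

lemma exists_centred_tree {V : Type*} [Fintype V] {K : SimpleGraph V} (hK : K.Connected) {m : ℕ}
    {u v : V} (h : IsCentred K m u v) :
    ∃ T : SimpleGraph V, T ≤ K ∧ T.IsTree ∧ IsCentred T m u v := by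
  classical
  obtain ⟨hadj, a, b, P, Q, hP, hQ, hlP, hlQ, hdisj⟩ := h
  have hPK : ∀ e ∈ P.edges, e ∈ K.edgeSet := fun e he =>
    (SimpleGraph.edgeSet_subset_edgeSet.mpr (deleteEdges_le _)) (P.edges_subset_edgeSet he)
  have hQK : ∀ e ∈ Q.edges, e ∈ K.edgeSet := fun e he =>
    (SimpleGraph.edgeSet_subset_edgeSet.mpr (deleteEdges_le _)) (Q.edges_subset_edgeSet he)
  set P₁ : K.Walk u a := P.transfer K hPK with hP₁
  set Q₁ : K.Walk v b := Q.transfer K hQK with hQ₁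
  set W : K.Walk a b := P₁.reverse.append (Walk.cons hadj Q₁) with hW
  have hWsupp : W.support = P.support.reverse ++ Q.support := by
    rw [hW, Walk.support_append, Walk.support_reverse]
    simp [hP₁, hQ₁, Walk.support_transfer]
  have hWpath : W.IsPath := by
    rw [Walk.isPath_def, hWsupp, List.nodup_append]
    refine ⟨List.nodup_reverse.mpr hP.support_nodup, hQ.support_nodup, ?_⟩
    intro x hx y hy hxy
    exact hdisj x (List.mem_reverse.mp hx) (hxy ▸ hy)
  have hWedges : {e : Sym2 V | e ∈ W.edges} = {e | e ∈ P.edges} ∪ {s(u, v)} ∪ {e | e ∈ Q.edges} := by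
    rw [hW]
    ext e
    simp only [Walk.edges_append, Walk.edges_reverse, Walk.edges_cons, hP₁, hQ₁,
      Walk.edges_transfer, List.mem_append, List.mem_reverse, List.mem_cons,
      Set.mem_union, Set.mem_setOf_eq, Set.mem_singleton_iff]
    tauto
  set K₀ := SimpleGraph.fromEdgeSet {e : Sym2 V | e ∈ W.edges} with hK₀
  have hK₀a : K₀.IsAcyclic := isAcyclic_walkGraph W hWpath
  have hK₀K : K₀ ≤ K := by
    intro x y hxy
    rw [hK₀, fromEdgeSet_adj] at hxy
    exact W.adj_of_mem_edges hxy.1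
  obtain ⟨T, hK₀T, hTK, hTtree⟩ := exists_tree_le hK hK₀K hK₀a
  have huvW : s(u, v) ∈ ({e : Sym2 V | e ∈ W.edges} : Set (Sym2 V)) := by
    rw [hWedges]; left; right; rfl
  have hTadj : T.Adj u v := hK₀T (by rw [hK₀, fromEdgeSet_adj]; exact ⟨huvW, hadj.ne⟩)
  refine ⟨T, hTK, hTtree, hTadj, a, b, ?_⟩
  have hPT : ∀ e ∈ P.edges, e ∈ (T.deleteEdges {s(u, v)}).edgeSet := by
    intro e he
    have heD := P.edges_subset_edgeSet he
    rw [edgeSet_deleteEdges] at heD ⊢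
    refine ⟨?_, heD.2⟩
    apply SimpleGraph.edgeSet_subset_edgeSet.mpr hK₀T
    rw [hK₀, edgeSet_fromEdgeSet]
    refine ⟨by rw [hWedges]; left; left; exact he, ?_⟩
    exact SimpleGraph.not_isDiag_of_mem_edgeSet _ heD.1
  have hQT : ∀ e ∈ Q.edges, e ∈ (T.deleteEdges {s(u, v)}).edgeSet := by
    intro e he
    have heD := Q.edges_subset_edgeSet he
    rw [edgeSet_deleteEdges] at heD ⊢
    refine ⟨?_, heD.2⟩
    apply SimpleGraph.edgeSet_subset_edgeSet.mpr hK₀T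
    rw [hK₀, edgeSet_fromEdgeSet]
    refine ⟨by rw [hWedges]; right; exact he, ?_⟩
    exact SimpleGraph.not_isDiag_of_mem_edgeSet _ heD.1
  refine ⟨P.transfer _ hPT, Q.transfer _ hQT, hP.transfer hPT, hQ.transfer hQT, ?_, ?_, ?_⟩
  · rwa [Walk.length_transfer]
  · rwa [Walk.length_transfer]
  · intro x hx hx'
    rw [Walk.support_transfer] at hx hx'
    exact hdisj x hx hx'

end Stmt15Aux


namespace Stmt15Aux

lemma sum_powerset_pow {α : Type*} [DecidableEq α] (W : Finset α) (p q : ℝ) :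
    ∑ C ∈ W.powerset, p ^ C.card * q ^ (W.card - C.card) = (p + q) ^ W.card := by
  rw [← Finset.prod_const, Finset.prod_add]
  refine Finset.sum_congr rfl fun C hC => ?_
  rw [Finset.prod_const, Finset.prod_const, Finset.card_sdiff_of_subset (Finset.mem_powerset.mp hC)]

lemma sum_powerset_cond {α : Type*} [DecidableEq α] (U F B : Finset α) (hF : F ⊆ U) (hB : B ⊆ U)
    (hFB : Disjoint F B) (p q : ℝ) (hpq : p + q = 1) :
    ∑ A ∈ U.powerset.filter (fun A => F ⊆ A ∧ Disjoint A B),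
      p ^ A.card * q ^ (U.card - A.card) = p ^ F.card * q ^ B.card := by
  set W : Finset α := (U \ F) \ B with hW
  have hBUF : B ⊆ U \ F := fun x hx =>
    Finset.mem_sdiff.mpr ⟨hB hx, fun hxf => (Finset.disjoint_left.mp hFB) hxf hx⟩
  have hWcard : W.card + F.card + B.card = U.card := by
    have h1 : (U \ F).card = U.card - F.card := Finset.card_sdiff_of_subset hF
    have h2 : W.card = (U \ F).card - B.card := Finset.card_sdiff_of_subset hBUF
    have h3 : F.card ≤ U.card := Finset.card_le_card hF
    have h4 : B.card ≤ (U \ F).card := Finset.card_le_card hBUF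
    omega
  have hbij : ∑ A ∈ U.powerset.filter (fun A => F ⊆ A ∧ Disjoint A B),
      p ^ A.card * q ^ (U.card - A.card)
      = ∑ C ∈ W.powerset, p ^ (C.card + F.card) * q ^ ((W.card - C.card) + B.card) := by
    refine Finset.sum_nbij' (fun A => A \ F) (fun C => C ∪ F) ?_ ?_ ?_ ?_ ?_
    · intro A hA
      rw [Finset.mem_filter, Finset.mem_powerset] at hA
      obtain ⟨hAU, hFA, hAB⟩ := hA
      rw [Finset.mem_powerset]
      intro x hx
      rw [Finset.mem_sdiff] at hx
      exact Finset.mem_sdiff.mpr ⟨Finset.mem_sdiff.mpr ⟨hAU hx.1, hx.2⟩,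
        fun hxB => (Finset.disjoint_left.mp hAB) hx.1 hxB⟩
    · intro C hC
      rw [Finset.mem_powerset] at hC
      rw [Finset.mem_filter, Finset.mem_powerset]
      have hCW : ∀ x ∈ C, x ∈ W := fun x hx => hC hx
      refine ⟨Finset.union_subset (fun x hx => ?_) hF, Finset.subset_union_right, ?_⟩
      · have := hCW x hx
        rw [hW, Finset.mem_sdiff, Finset.mem_sdiff] at this
        exact this.1.1
      · rw [Finset.disjoint_left]
        intro x hx hxB
        rcases Finset.mem_union.mp hx with h | h
        · have := hCW x h
          rw [hW, Finset.mem_sdiff] at this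
          exact this.2 hxB
        · exact (Finset.disjoint_left.mp hFB) h hxB
    · intro A hA
      rw [Finset.mem_filter] at hA
      exact Finset.sdiff_union_of_subset hA.2.1
    · intro C hC
      rw [Finset.mem_powerset] at hC
      show (C ∪ F) \ F = C
      rw [Finset.union_sdiff_right]
      refine Finset.sdiff_eq_self_of_disjoint ?_
      rw [Finset.disjoint_left]
      intro x hx hxF
      have := hC hx
      rw [hW, Finset.mem_sdiff, Finset.mem_sdiff] at this
      exact this.1.2 hxF
    · intro A hA
      rw [Finset.mem_filter, Finset.mem_powerset] at hA
      obtain ⟨hAU, hFA, hAB⟩ := hA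
      have hcard : (A \ F).card + F.card = A.card := by
        have := Finset.card_sdiff_of_subset hFA
        have := Finset.card_le_card hFA
        omega
      have hsub : (A \ F) ⊆ W := by
        intro x hx
        rw [Finset.mem_sdiff] at hx
        exact Finset.mem_sdiff.mpr ⟨Finset.mem_sdiff.mpr ⟨hAU hx.1, hx.2⟩,
          fun hxB => (Finset.disjoint_left.mp hAB) hx.1 hxB⟩
      have hAcardU : A.card ≤ U.card := Finset.card_le_card hAU
      have h5 : (A \ F).card ≤ W.card := Finset.card_le_card hsub
      show p ^ A.card * q ^ (U.card - A.card)
          = p ^ ((A \ F).card + F.card) * q ^ ((W.card - (A \ F).card) + B.card)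
      have hexp : U.card - A.card = (W.card - (A \ F).card) + B.card := by omega
      rw [hcard, ← hexp]
  rw [hbij]
  have : ∀ C ∈ W.powerset, p ^ (C.card + F.card) * q ^ ((W.card - C.card) + B.card)
      = (p ^ F.card * q ^ B.card) * (p ^ C.card * q ^ (W.card - C.card)) := by
    intro C _
    rw [pow_add, pow_add]
    ring
  rw [Finset.sum_congr rfl this, ← Finset.mul_sum, sum_powerset_pow, hpq, one_pow, mul_one]

def allEdges (n : ℕ) : Finset (Sym2 (Fin n)) := Finset.univ.filter fun e => ¬ e.IsDiag

lemma card_allEdges (n : ℕ) : (allEdges n).card = n.choose 2 := by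
  rw [allEdges, ← Fintype.card_subtype]
  rw [Sym2.card_subtype_not_diag, Fintype.card_fin]

lemma edgeFinset_mem_powerset (n : ℕ) (G : SimpleGraph (Fin n)) :
    G.edgeFinset ∈ (allEdges n).powerset := by
  rw [Finset.mem_powerset]
  intro e he
  rw [SimpleGraph.mem_edgeFinset] at he
  rw [allEdges, Finset.mem_filter]
  exact ⟨Finset.mem_univ _, SimpleGraph.not_isDiag_of_mem_edgeSet _ he⟩

lemma edgeSet_fromEdgeSet_coe {n : ℕ} {A : Finset (Sym2 (Fin n))}
    (hA : A ∈ (allEdges n).powerset) :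
    (SimpleGraph.fromEdgeSet (A : Set (Sym2 (Fin n)))).edgeSet = (A : Set (Sym2 (Fin n))) := by
  rw [SimpleGraph.edgeSet_fromEdgeSet]
  rw [Finset.mem_powerset] at hA
  ext e
  simp only [Set.mem_diff, Finset.mem_coe, Set.mem_setOf_eq, and_iff_left_iff_imp]
  intro he
  have := hA he
  rw [allEdges, Finset.mem_filter] at this
  exact this.2

lemma sum_graph_eq (n : ℕ) (F : SimpleGraph (Fin n) → ℝ) :
    ∑ G : SimpleGraph (Fin n), F G
      = ∑ A ∈ (allEdges n).powerset, F (SimpleGraph.fromEdgeSet (A : Set (Sym2 (Fin n)))) := by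
  refine Finset.sum_nbij' (fun G => G.edgeFinset)
    (fun A => SimpleGraph.fromEdgeSet (A : Set (Sym2 (Fin n)))) ?_ ?_ ?_ ?_ ?_
  · intro G _; exact edgeFinset_mem_powerset n G
  · intro A _; exact Finset.mem_univ _
  · intro G _
    beta_reduce
    rw [SimpleGraph.coe_edgeFinset, SimpleGraph.fromEdgeSet_edgeSet]
  · intro A hA
    beta_reduce
    apply Finset.coe_injective
    rw [SimpleGraph.coe_edgeFinset]
    exact edgeSet_fromEdgeSet_coe hA
  · intro G _
    beta_reduce
    rw [SimpleGraph.coe_edgeFinset, SimpleGraph.fromEdgeSet_edgeSet]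

end Stmt15Aux


open Stmt15Aux

/-- Let `p ∈ (0,1)`, `1 ≤ m < t ≤ n`, and `S ⊆ {1,…,n}` with `|S| = t`.
For `G ~ G(n,p)`, let `X_S` be the number of `m`-centred edges of the induced subgraph `G[S]`
if `G[S]` is connected and `G` has no edges between `S` and its complement, and `X_S = 0`
otherwise. Then `E[X_S] ≤ |M(t,m)| · p^{t−1} · (1−p)^{t(n−t)}`. -/
theorem stmt15 (n : ℕ) (hn : 1 ≤ n) (p : ℝ) (hp : p ∈ Set.Ioo (0 : ℝ) 1)
    (m t : ℕ) (hm : 1 ≤ m) (hmt : m < t) (htn : t ≤ n)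
    (S : Finset (Fin n)) (hS : S.card = t) :
    erExpect n p (fun G =>
        if (G.induce (S : Set (Fin n))).Connected ∧ ∀ u ∈ S, ∀ v ∉ S, ¬G.Adj u v then
          (centredEdgeCount (G.induce (S : Set (Fin n))) m : ℝ)
        else 0) ≤
      (Mcard t m : ℝ) * p ^ (t - 1) * (1 - p) ^ (t * (n - t)) := by
  classical
  have hp0 : (0:ℝ) ≤ p := le_of_lt hp.1
  have hq0 : (0:ℝ) ≤ 1 - p := by linarith [hp.2]
  have htpos : 0 < t := by omega
  haveI : Inhabited (Fin t) := ⟨⟨0, htpos⟩⟩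
  set S' : Set (Fin n) := (S : Set (Fin n)) with hS'def
  obtain ⟨ψ⟩ : Nonempty (Fin t ≃ ↥S') := ⟨(S.orderIsoOfFin hS).toEquiv.trans
    (Equiv.subtypeEquivRight (fun x => by simp [hS'def]))⟩
  set κ : Fin t → Fin n := fun i => ((ψ i : ↥S') : Fin n) with hκdef
  have hκmem : ∀ i, κ i ∈ S := fun i => (ψ i).2
  have hκinj : Function.Injective κ := by
    intro i j h
    exact ψ.injective (Subtype.ext h)
  set κe : Sym2 (Fin t) ↪ Sym2 (Fin n) := ⟨Sym2.map κ, Sym2.map.injective hκinj⟩ with hκedef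
  set Fmap : SimpleGraph (Fin t) → Finset (Sym2 (Fin n)) :=
    fun T => T.edgeFinset.map κe with hFmapdef
  set Bset : Finset (Sym2 (Fin n)) := (S ×ˢ Sᶜ).image (fun x => s(x.1, x.2)) with hBdef
  have hBmem : ∀ x ∈ Bset, ∃ u v, x = s(u, v) ∧ u ∈ S ∧ v ∉ S := by
    intro x hx
    rw [hBdef, Finset.mem_image] at hx
    obtain ⟨⟨u, v⟩, hmem, rfl⟩ := hx
    rw [Finset.mem_product, Finset.mem_compl] at hmem
    exact ⟨u, v, rfl, hmem.1, hmem.2⟩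
  have hBcard : Bset.card = t * (n - t) := by
    rw [hBdef, Finset.card_image_of_injOn, Finset.card_product, Finset.card_compl,
      Fintype.card_fin, hS]
    rintro ⟨u, v⟩ h1 ⟨u', v'⟩ h2 heq
    simp only [Finset.mem_coe, Finset.mem_product, Finset.mem_compl] at h1 h2
    simp only [Sym2.eq_iff] at heq
    rcases heq with ⟨rfl, rfl⟩ | ⟨rfl, rfl⟩
    · rfl
    · exact absurd h1.1 h2.2
  have hBsub : Bset ⊆ allEdges n := by
    intro x hx
    obtain ⟨u, v, rfl, hu, hv⟩ := hBmem x hx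
    rw [allEdges, Finset.mem_filter]
    refine ⟨Finset.mem_univ _, ?_⟩
    rw [Sym2.mk_isDiag_iff]
    intro h
    exact hv (h ▸ hu)
  have hFsub : ∀ T : SimpleGraph (Fin t), Fmap T ⊆ allEdges n := by
    intro T x hx
    rw [hFmapdef, Finset.mem_map] at hx
    obtain ⟨e₀, he₀, rfl⟩ := hx
    induction e₀ using Sym2.ind with
    | _ a b =>
      have hTab : T.Adj a b := by rwa [SimpleGraph.mem_edgeFinset, SimpleGraph.mem_edgeSet] at he₀
      rw [allEdges, Finset.mem_filter]
      refine ⟨Finset.mem_univ _, ?_⟩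
      show ¬ (Sym2.map κ s(a, b)).IsDiag
      rw [Sym2.map_pair_eq, Sym2.mk_isDiag_iff]
      intro h
      exact hTab.ne (hκinj h)
  have hFB : ∀ T : SimpleGraph (Fin t), Disjoint (Fmap T) Bset := by
    intro T
    rw [Finset.disjoint_left]
    intro x hx hxB
    obtain ⟨u, v, rfl, hu, hv⟩ := hBmem x hxB
    rw [hFmapdef, Finset.mem_map] at hx
    obtain ⟨e₀, he₀, hEq⟩ := hx
    induction e₀ using Sym2.ind with
    | _ a b =>
      have : Sym2.map κ s(a, b) = s(u, v) := hEq
      rw [Sym2.map_pair_eq, Sym2.eq_iff] at this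
      rcases this with ⟨h1, h2⟩ | ⟨h1, h2⟩
      · exact hv (h2 ▸ hκmem b)
      · exact hv (h1 ▸ hκmem a)
  set Mfin : Finset (Sym2 (Fin t) × SimpleGraph (Fin t)) := Finset.univ.filter
    (fun pr => pr.2.IsTree ∧ ∃ u v, pr.1 = s(u, v) ∧ IsCentred pr.2 m u v) with hMfin
  have hMcard : Mcard t m = Mfin.card := by
    rw [Mcard, Set.ncard_eq_toFinset_card', hMfin]
    congr 1
    ext pr
    simp [Set.mem_toFinset]
  have hFcard : ∀ pr ∈ Mfin, (Fmap pr.2).card = t - 1 := by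
    intro pr hpr
    rw [hMfin, Finset.mem_filter] at hpr
    rw [hFmapdef]
    beta_reduce
    rw [Finset.card_map]
    have := hpr.2.1.card_edgeFinset
    rw [Fintype.card_fin] at this
    omega
  rw [erExpect, sum_graph_eq]
  have key : ∀ A ∈ (allEdges n).powerset,
      erWeight n p (SimpleGraph.fromEdgeSet (A : Set (Sym2 (Fin n)))) *
        (fun G => if (G.induce (S : Set (Fin n))).Connected ∧ ∀ u ∈ S, ∀ v ∉ S, ¬G.Adj u v then
          (centredEdgeCount (G.induce (S : Set (Fin n))) m : ℝ) else 0)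
          (SimpleGraph.fromEdgeSet (A : Set (Sym2 (Fin n)))) ≤
      ∑ pr ∈ Mfin, (p ^ A.card * (1 - p) ^ (n.choose 2 - A.card)) *
        (if Fmap pr.2 ⊆ A ∧ Disjoint A Bset then 1 else 0) := by
    intro A hA
    beta_reduce
    have hw : erWeight n p (SimpleGraph.fromEdgeSet (A : Set (Sym2 (Fin n))))
        = p ^ A.card * (1 - p) ^ (n.choose 2 - A.card) := by
      rw [erWeight]
      rw [show (SimpleGraph.fromEdgeSet (A : Set (Sym2 (Fin n)))).edgeSet.ncard = A.card from by
        rw [edgeSet_fromEdgeSet_coe hA, Set.ncard_coe_finset]]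
    set G := SimpleGraph.fromEdgeSet (A : Set (Sym2 (Fin n))) with hGdef
    have hwnn : (0:ℝ) ≤ p ^ A.card * (1 - p) ^ (n.choose 2 - A.card) :=
      mul_nonneg (pow_nonneg hp0 _) (pow_nonneg hq0 _)
    by_cases hcond : (G.induce (S : Set (Fin n))).Connected ∧ ∀ u ∈ S, ∀ v ∉ S, ¬G.Adj u v
    · rw [if_pos hcond, hw]
      have hdisjAB : Disjoint A Bset := by
        rw [Finset.disjoint_left]
        intro x hxA hxB
        obtain ⟨u, v, rfl, hu, hv⟩ := hBmem x hxB
        have huv : u ≠ v := fun h => hv (h ▸ hu)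
        have : G.Adj u v := by
          rw [hGdef, SimpleGraph.fromEdgeSet_adj]
          exact ⟨Finset.mem_coe.mpr hxA, huv⟩
        exact hcond.2 u hu v hv this
      have hcount : centredEdgeCount (G.induce (S : Set (Fin n))) m ≤
          (Mfin.filter (fun pr => Fmap pr.2 ⊆ A)).card := by
        have hcnt_eq : centredEdgeCount (G.induce (S : Set (Fin n))) m =
            (Finset.univ.filter (fun e : Sym2 ↥S' =>
              ∃ u v, e = s(u, v) ∧ IsCentred (G.induce S') m u v)).card := by
          rw [centredEdgeCount, Set.ncard_eq_toFinset_card']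
          simp only [Set.toFinset_setOf]
          rfl
        rw [hcnt_eq]
        set lhsF := Finset.univ.filter (fun e : Sym2 ↥S' =>
          ∃ u v, e = s(u, v) ∧ IsCentred (G.induce S') m u v) with hlhsF
        have hex : ∀ e ∈ lhsF, ∃ pr : Sym2 (Fin t) × SimpleGraph (Fin t),
            pr ∈ Mfin.filter (fun pr => Fmap pr.2 ⊆ A) ∧ pr.1 = Sym2.map (⇑ψ.symm) e := by
          intro e he
          rw [hlhsF, Finset.mem_filter] at he
          obtain ⟨-, u, v, rfl, hC⟩ := he
          let χ : (G.induce S') ≃g SimpleGraph.comap (⇑ψ) (G.induce S') :=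
            ⟨ψ.symm, by intro a b; simp [SimpleGraph.comap_adj]⟩
          have hKconn : (SimpleGraph.comap (⇑ψ) (G.induce S')).Connected := by
            refine χ.connected_iff.mp ?_
            rw [← hS'def] at hcond
            exact hcond.1
          have hCK : IsCentred (SimpleGraph.comap (⇑ψ) (G.induce S')) m (ψ.symm u) (ψ.symm v) :=
            Stmt15Aux.IsCentred.map_iso χ hC
          obtain ⟨T, hTK, hTtree, hTC⟩ := Stmt15Aux.exists_centred_tree hKconn hCK
          refine ⟨(s(ψ.symm u, ψ.symm v), T), ?_, by rw [Sym2.map_pair_eq]⟩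
          rw [Finset.mem_filter, hMfin, Finset.mem_filter]
          refine ⟨⟨Finset.mem_univ _, hTtree, ψ.symm u, ψ.symm v, rfl, hTC⟩, ?_⟩
          intro x hx
          rw [hFmapdef] at hx
          beta_reduce at hx
          rw [Finset.mem_map] at hx
          obtain ⟨e₀, he₀, rfl⟩ := hx
          induction e₀ using Sym2.ind with
          | _ a b =>
            have hTab : T.Adj a b := by
              rwa [SimpleGraph.mem_edgeFinset, SimpleGraph.mem_edgeSet] at he₀
            have hKab : (SimpleGraph.comap (⇑ψ) (G.induce S')).Adj a b := hTK hTab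
            rw [SimpleGraph.comap_adj] at hKab
            have hGab : G.Adj (κ a) (κ b) := by
              rw [hκdef]
              beta_reduce
              exact hKab
            have hmem : s(κ a, κ b) ∈ G.edgeSet := hGab
            rw [hGdef, edgeSet_fromEdgeSet_coe hA] at hmem
            show κe s(a, b) ∈ A
            rw [show κe s(a, b) = s(κ a, κ b) from by
              rw [hκedef]; exact Sym2.map_pair_eq κ a b]
            exact Finset.mem_coe.mp hmem
        choose gch hg1 hg2 using hex
        refine Finset.card_le_card_of_injOn
          (fun e => if h : e ∈ lhsF then gch e h else default) ?_ ?_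
        · intro e he
          simp only [Finset.mem_coe] at he ⊢
          simp only [dif_pos he]
          exact hg1 e he
        · intro e₁ h₁ e₂ h₂ hEq
          rw [Finset.mem_coe] at h₁ h₂
          simp only [dif_pos h₁, dif_pos h₂] at hEq
          have hfst := congrArg Prod.fst hEq
          rw [hg2 e₁ h₁, hg2 e₂ h₂] at hfst
          exact Sym2.map.injective ψ.symm.injective hfst
      have hsum_eq : ∑ pr ∈ Mfin, (p ^ A.card * (1 - p) ^ (n.choose 2 - A.card)) *
          (if Fmap pr.2 ⊆ A ∧ Disjoint A Bset then 1 else 0)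
          = (p ^ A.card * (1 - p) ^ (n.choose 2 - A.card)) *
            ((Mfin.filter (fun pr => Fmap pr.2 ⊆ A)).card : ℝ) := by
        rw [← Finset.mul_sum]
        congr 1
        rw [← Finset.sum_boole]
        refine Finset.sum_congr rfl (fun pr _ => ?_)
        exact if_congr (and_iff_left hdisjAB) rfl rfl
      rw [hsum_eq]
      have hcnt' : (centredEdgeCount (G.induce (S : Set (Fin n))) m : ℝ) ≤
          ((Mfin.filter (fun pr => Fmap pr.2 ⊆ A)).card : ℝ) := Nat.cast_le.mpr hcount
      exact mul_le_mul_of_nonneg_left hcnt' hwnn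
    · rw [if_neg hcond, hw, mul_zero]
      refine Finset.sum_nonneg (fun pr _ => ?_)
      refine mul_nonneg hwnn ?_
      split <;> norm_num
  refine le_trans (Finset.sum_le_sum key) ?_
  rw [Finset.sum_comm]
  have inner_eq : ∀ pr ∈ Mfin, ∑ A ∈ (allEdges n).powerset,
      (p ^ A.card * (1 - p) ^ (n.choose 2 - A.card)) *
        (if Fmap pr.2 ⊆ A ∧ Disjoint A Bset then 1 else 0)
      = p ^ (t - 1) * (1 - p) ^ (t * (n - t)) := by
    intro pr hpr
    have : ∑ A ∈ (allEdges n).powerset,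
        (p ^ A.card * (1 - p) ^ (n.choose 2 - A.card)) *
          (if Fmap pr.2 ⊆ A ∧ Disjoint A Bset then 1 else 0)
        = ∑ A ∈ (allEdges n).powerset.filter (fun A => Fmap pr.2 ⊆ A ∧ Disjoint A Bset),
            p ^ A.card * (1 - p) ^ ((allEdges n).card - A.card) := by
      rw [Finset.sum_filter]
      refine Finset.sum_congr rfl (fun A _ => ?_)
      rw [card_allEdges, mul_ite, mul_one, mul_zero]
    rw [this, sum_powerset_cond (allEdges n) (Fmap pr.2) Bset (hFsub pr.2) hBsub
      (hFB pr.2) p (1 - p) (by ring)]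
    rw [hFcard pr hpr, hBcard]
  rw [Finset.sum_congr rfl inner_eq, Finset.sum_const, nsmul_eq_mul, ← hMcard]
  rw [← mul_assoc]

end
end

section
/- Let m ≥ 1 be an integer, let G be a connected graph, and let e be an m-centred edge of G. Then G has a spanning tree T containing e such that e is an m-centred edge of T. -/
open SimpleGraph Finset Real Filter
open scoped Classical

noncomputable section

namespace MyAux

variable {V : Type*}

lemma acyclic_sup_edge {H : SimpleGraph V} (hH : H.IsAcyclic) {x y : V} (hxy : x ≠ y)
    (hr : ¬ H.Reachable x y) : (H ⊔ SimpleGraph.fromEdgeSet {s(x, y)}).IsAcyclic := by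
  intro w c hc
  by_cases he : s(x, y) ∈ c.edges
  · have hb : (H ⊔ SimpleGraph.fromEdgeSet {s(x, y)}).IsBridge s(x, y) := by
      rw [isBridge_iff]
      refine fun hreach => hr (hreach.mono ?_)
      intro a b hab
      rw [deleteEdges_adj, sup_adj, fromEdgeSet_adj] at hab
      rcases hab with ⟨h1 | h1, h2⟩
      · exact h1
      · exact absurd h1.1 h2
    rw [isBridge_iff_forall_cycle_notMem (by simp [fromEdgeSet_adj, hxy])] at hb
    exact hb c hc he
  · have hedges : ∀ e ∈ c.edges, e ∈ H.edgeSet := by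
      intro e hec
      have h := c.edges_subset_edgeSet hec
      rw [edgeSet_sup] at h
      rcases h with h | h
      · exact h
      · rw [edgeSet_fromEdgeSet] at h
        rw [h.1] at hec
        exact absurd hec he
    exact hH (c.transfer H hedges) (hc.transfer hedges)

lemma acyclic_walk_edges {G : SimpleGraph V} {u v : V} (p : G.Walk u v)
    (hp : p.IsPath) : (SimpleGraph.fromEdgeSet {e | e ∈ p.edges}).IsAcyclic := by
  induction p with
  | nil => simp
  | @cons u w v h q ih =>
    rw [SimpleGraph.Walk.cons_isPath_iff] at hp
    have hq := ih hp.1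
    have hset : {e | e ∈ (SimpleGraph.Walk.cons h q).edges}
        = {e | e ∈ q.edges} ∪ {s(u, w)} := by
      ext e; simp [SimpleGraph.Walk.edges_cons, or_comm]
    rw [hset, fromEdgeSet_union]
    refine acyclic_sup_edge hq h.ne ?_
    rintro ⟨r⟩
    cases r with
    | nil => exact h.ne rfl
    | cons hadj r' =>
      rw [fromEdgeSet_adj] at hadj
      exact hp.2 (SimpleGraph.Walk.fst_mem_support_of_mem_edges q hadj.1)

lemma reach_of_walk {G H : SimpleGraph V} (hc : ∀ a b, G.Adj a b → H.Reachable a b)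
    {x y : V} (w : G.Walk x y) : H.Reachable x y := by
  induction w with
  | nil => exact SimpleGraph.Reachable.refl _
  | cons h q ih => exact (hc _ _ h).trans ih

lemma exists_tree_le [Fintype V] [DecidableEq V] {G F : SimpleGraph V}
    (hG : G.Connected) (hFG : F ≤ G) (hF : F.IsAcyclic) :
    ∃ T : SimpleGraph V, F ≤ T ∧ T ≤ G ∧ T.IsTree := by
  obtain ⟨H, hHmem, hHmax⟩ := Set.Finite.exists_maximalFor (id : SimpleGraph V → SimpleGraph V)
    {H | F ≤ H ∧ H ≤ G ∧ H.IsAcyclic} (Set.toFinite _) ⟨F, le_refl _, hFG, hF⟩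
  obtain ⟨hFH, hHG, hHa⟩ := hHmem
  refine ⟨H, hFH, hHG, ⟨?_, hHa⟩⟩
  rw [connected_iff]
  refine ⟨fun x y => ?_, hG.nonempty⟩
  by_contra hxy
  have key : ∃ a b, G.Adj a b ∧ ¬ H.Reachable a b := by
    by_contra hcon
    push_neg at hcon
    exact hxy (reach_of_walk hcon (hG.preconnected x y).some)
  obtain ⟨a, b, hab, hnr⟩ := key
  have hmem' : (H ⊔ SimpleGraph.fromEdgeSet {s(a, b)}) ∈
      {H | F ≤ H ∧ H ≤ G ∧ H.IsAcyclic} := by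
    refine ⟨le_trans hFH le_sup_left, sup_le hHG ?_, acyclic_sup_edge hHa hab.ne hnr⟩
    intro c d hcd
    rw [fromEdgeSet_adj, Set.mem_singleton_iff, Sym2.eq_iff] at hcd
    rcases hcd.1 with ⟨rfl, rfl⟩ | ⟨rfl, rfl⟩
    · exact hab
    · exact hab.symm
  have heq := le_antisymm le_sup_left (hHmax hmem' le_sup_left)
  apply hnr
  have : (H ⊔ SimpleGraph.fromEdgeSet {s(a, b)}).Adj a b :=
    Or.inr (by rw [fromEdgeSet_adj]; exact ⟨rfl, hab.ne⟩)
  rw [show (H ⊔ SimpleGraph.fromEdgeSet {s(a, b)}) = H from (heq).symm] at this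
  exact this.reachable

end MyAux

/-- If `G` is a connected graph and `uv` is an `m`-centred edge of `G`
(for an integer `m ≥ 1`), then `G` has a spanning tree `T` containing `uv` such that `uv`
is an `m`-centred edge of `T`. -/
theorem stmt16 {V : Type*} [Fintype V] [DecidableEq V] (m : ℕ) (hm : 1 ≤ m)
    (G : SimpleGraph V) (hG : G.Connected) (u v : V) (huv : IsCentred G m u v) :
    ∃ T : SimpleGraph V, T ≤ G ∧ T.IsTree ∧ T.Adj u v ∧ IsCentred T m u v := by
  obtain ⟨hadj, a, b, P, Q, hP, hQ, hPl, hQl, hdisj⟩ := huv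
  have hG'le : G.deleteEdges {s(u, v)} ≤ G := SimpleGraph.deleteEdges_le _
  have hPe : ∀ e ∈ P.edges, e ∈ G.edgeSet :=
    fun e he => SimpleGraph.edgeSet_mono hG'le (P.edges_subset_edgeSet he)
  have hQe : ∀ e ∈ Q.edges, e ∈ G.edgeSet :=
    fun e he => SimpleGraph.edgeSet_mono hG'le (Q.edges_subset_edgeSet he)
  let P₁ : G.Walk u a := P.transfer G hPe
  let Q₁ : G.Walk v b := Q.transfer G hQe
  let W : G.Walk a b := P₁.reverse.append (SimpleGraph.Walk.cons hadj Q₁)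
  have hWsup : W.support = P.support.reverse ++ Q.support := by
    show (P₁.reverse.append (SimpleGraph.Walk.cons hadj Q₁)).support = _
    rw [SimpleGraph.Walk.support_append, SimpleGraph.Walk.support_reverse,
      SimpleGraph.Walk.support_cons]
    simp [P₁, Q₁, SimpleGraph.Walk.support_transfer]
  have hWp : W.IsPath := by
    rw [SimpleGraph.Walk.isPath_def, hWsup]
    refine List.Nodup.append (by simpa using hP.support_nodup) hQ.support_nodup ?_
    intro x hx hy
    exact hdisj x (List.mem_reverse.mp hx) hy
  have hWedges : ∀ e, (e ∈ P.edges ∨ e ∈ Q.edges ∨ e = s(u, v)) → e ∈ W.edges := by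
    intro e he
    show e ∈ (P₁.reverse.append (SimpleGraph.Walk.cons hadj Q₁)).edges
    rw [SimpleGraph.Walk.edges_append, SimpleGraph.Walk.edges_reverse,
      SimpleGraph.Walk.edges_cons]
    rcases he with h | h | h
    · exact List.mem_append_left _ (List.mem_reverse.mpr
        (by rwa [show P₁.edges = P.edges from SimpleGraph.Walk.edges_transfer _ _]))
    · exact List.mem_append_right _ (List.mem_cons_of_mem _
        (by rwa [show Q₁.edges = Q.edges from SimpleGraph.Walk.edges_transfer _ _]))
    · exact List.mem_append_right _ (by rw [h]; exact List.mem_cons_self)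
  have hFG : SimpleGraph.fromEdgeSet {e | e ∈ W.edges} ≤ G := by
    intro c d hcd
    rw [SimpleGraph.fromEdgeSet_adj] at hcd
    exact W.edges_subset_edgeSet hcd.1
  obtain ⟨T, hFT, hTG, hTt⟩ := MyAux.exists_tree_le hG hFG (MyAux.acyclic_walk_edges W hWp)
  have hTedges : ∀ e ∈ W.edges, e ∈ T.edgeSet := by
    intro e he
    apply SimpleGraph.edgeSet_mono hFT
    rw [SimpleGraph.edgeSet_fromEdgeSet]
    exact ⟨he, SimpleGraph.not_isDiag_of_mem_edgeSet G (W.edges_subset_edgeSet he)⟩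
  have hTadj : T.Adj u v := by
    rw [← SimpleGraph.mem_edgeSet]
    exact hTedges _ (hWedges _ (Or.inr (Or.inr rfl)))
  have hPne : ∀ e ∈ P.edges, e ∈ (T.deleteEdges {s(u, v)}).edgeSet := by
    intro e he
    rw [SimpleGraph.edgeSet_deleteEdges]
    refine ⟨hTedges _ (hWedges _ (Or.inl he)), ?_⟩
    have := P.edges_subset_edgeSet he
    rw [SimpleGraph.edgeSet_deleteEdges] at this
    exact this.2
  have hQne : ∀ e ∈ Q.edges, e ∈ (T.deleteEdges {s(u, v)}).edgeSet := by
    intro e he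
    rw [SimpleGraph.edgeSet_deleteEdges]
    refine ⟨hTedges _ (hWedges _ (Or.inr (Or.inl he))), ?_⟩
    have := Q.edges_subset_edgeSet he
    rw [SimpleGraph.edgeSet_deleteEdges] at this
    exact this.2
  refine ⟨T, hTG, hTt, hTadj, hTadj, a, b, P.transfer _ hPne, Q.transfer _ hQne,
    hP.transfer _, hQ.transfer _, ?_, ?_, ?_⟩
  · rwa [SimpleGraph.Walk.length_transfer]
  · rwa [SimpleGraph.Walk.length_transfer]
  · intro x hx
    rw [SimpleGraph.Walk.support_transfer] at hx ⊢
    exact hdisj x hx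


end
end

section
/- Let P be a path of length ℓ with vertex set V and edge set E, let α ≥ 1/ℓ be a real number, and let B ⊆ E with |B| ≤ α·ℓ. Let Q be the graph obtained from P by removing the edges in B. Then there exist pairwise vertex-disjoint subpaths of Q, each of length at least 1/(3α), which together cover at least (1/3 − α)·ℓ vertices of V. -/
open SimpleGraph Finset Real Filter
open scoped Classical

noncomputable section

namespace Stmt18Aux
variable {V : Type*} [DecidableEq V]

def splitWalk (G : SimpleGraph V) (B : Finset (Sym2 V)) :
    ∀ {u v : V}, G.Walk u v → (Σ b : V, G.Walk u b) × List (Σ a : V, Σ b : V, G.Walk a b)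
  | u, _, Walk.nil => (⟨u, Walk.nil⟩, [])
  | u, _, Walk.cons (v := w) h p =>
      if s(u, w) ∈ B then
        (⟨u, Walk.nil⟩, ⟨w, (splitWalk G B p).1.1, (splitWalk G B p).1.2⟩ :: (splitWalk G B p).2)
      else
        (⟨(splitWalk G B p).1.1, Walk.cons h (splitWalk G B p).1.2⟩, (splitWalk G B p).2)

def pieces (G : SimpleGraph V) (B : Finset (Sym2 V)) {u v : V} (p : G.Walk u v) :
    List (Σ a : V, Σ b : V, G.Walk a b) :=
  ⟨u, (splitWalk G B p).1.1, (splitWalk G B p).1.2⟩ :: (splitWalk G B p).2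

lemma pieces_support (G : SimpleGraph V) (B : Finset (Sym2 V)) {u v : V} (p : G.Walk u v) :
    ((pieces G B p).map (fun s => s.2.2.support)).flatten = p.support := by
  induction p with
  | nil => simp [pieces, splitWalk]
  | @cons u w v h p ih =>
    by_cases hb : s(u, w) ∈ B <;>
      simp only [pieces, splitWalk, List.map_cons, List.flatten,
        Walk.support_cons, Walk.support_nil] at ih ⊢
    · rw [if_pos hb]; simpa using ih
    · rw [if_neg hb]; simpa using ih

lemma pieces_edges (G : SimpleGraph V) (B : Finset (Sym2 V)) {u v : V} (p : G.Walk u v) :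
    ((pieces G B p).map (fun s => s.2.2.edges)).flatten
      = p.edges.filter (fun e => decide (e ∉ B)) := by
  induction p with
  | nil => simp [pieces, splitWalk]
  | @cons u w v h p ih =>
    by_cases hb : s(u, w) ∈ B <;>
      simp only [pieces, splitWalk, List.map_cons, List.flatten,
        Walk.edges_cons, Walk.edges_nil] at ih ⊢
    · rw [if_pos hb]; simp only [List.append_eq] at ih; simp [hb, ih]
    · rw [if_neg hb]; simp only [List.append_eq] at ih; simp [hb, ih]

lemma pieces_length (G : SimpleGraph V) (B : Finset (Sym2 V)) {u v : V} (p : G.Walk u v) :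
    (pieces G B p).length = (p.edges.filter (fun e => decide (e ∈ B))).length + 1 := by
  induction p with
  | nil => simp [pieces, splitWalk]
  | @cons u w v h p ih =>
    by_cases hb : s(u, w) ∈ B <;>
      simp only [pieces, splitWalk, Walk.edges_cons] at ih ⊢
    · rw [if_pos hb]; simp [hb, ih]
    · rw [if_neg hb]; simp only [List.length_cons] at ih; simp [hb]; omega

end Stmt18Aux

/-- Let `P` be a path of length `ℓ` (realized as a path `W` in a graph `G`),
let `α ≥ 1/ℓ`, and let `B` be a set of at most `α·ℓ` edges of `P`. Let `Q` be the graph obtained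
from `P` by removing the edges in `B`. Then there is a collection of pairwise vertex-disjoint
paths of `Q` (automatically subpaths of `P`), each of length at least `1/(3α)`, covering at
least `(1/3 − α)·ℓ` vertices. -/
theorem stmt18 {V : Type*} [DecidableEq V] (G : SimpleGraph V) (u v : V) (ℓ : ℕ)
    (W : G.Walk u v) (hW : W.IsPath) (hlen : W.length = ℓ)
    (α : ℝ) (hα : 1 / (ℓ : ℝ) ≤ α)
    (B : Finset (Sym2 V)) (hB : ∀ e ∈ B, e ∈ W.edges) (hBcard : (B.card : ℝ) ≤ α * ℓ) :
    ∃ P : Finset (Σ a : V, Σ b : V,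
        (SimpleGraph.fromEdgeSet {e | e ∈ W.edges ∧ e ∉ B}).Walk a b),
      IsPathSystemR (SimpleGraph.fromEdgeSet {e | e ∈ W.edges ∧ e ∉ B}) (1 / (3 * α)) P ∧
        (1 / 3 - α) * ℓ ≤ (coveredCard P : ℝ) := by
  classical
  set Q := SimpleGraph.fromEdgeSet {e | e ∈ W.edges ∧ e ∉ B} with hQ
  rcases Nat.eq_zero_or_pos ℓ with hℓ0 | hℓpos'
  · subst hℓ0
    refine ⟨∅, ⟨⟨by simp, by simp⟩, by simp [coveredCard]⟩⟩
  have hℓpos : 0 < (ℓ : ℝ) := by exact_mod_cast hℓpos'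
  have hαpos : 0 < α := lt_of_lt_of_le (by positivity) hα
  have hαℓ : 1 ≤ α * ℓ := by
    rw [div_le_iff₀ hℓpos] at hα; linarith
  set r : ℝ := 1 / (3 * α) with hr
  have hrpos : 0 < r := by positivity
  set L := Stmt18Aux.pieces G B W with hL
  have hsup : (L.map (fun s => s.2.2.support)).flatten = W.support :=
    Stmt18Aux.pieces_support G B W
  have hflatnodup : ((L.map (fun s => s.2.2.support)).flatten).Nodup := by
    rw [hsup]; exact hW.support_nodup
  obtain ⟨hnodups, hdisj⟩ := List.nodup_flatten.mp hflatnodup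
  have hpath : ∀ s ∈ L, s.2.2.IsPath := by
    intro s hs
    rw [Walk.isPath_def]
    exact hnodups _ (List.mem_map_of_mem hs)
  have hdisjL : L.Pairwise (fun s t => s.2.2.support.Disjoint t.2.2.support) :=
    List.pairwise_map.mp hdisj
  have hne1 : L.Pairwise (fun s t => s.1 ≠ t.1) := by
    refine hdisjL.imp ?_
    intro s t h he
    refine h (Walk.start_mem_support _) ?_
    rw [he]
    exact Walk.start_mem_support _
  have hLnodup : L.Nodup := hne1.imp (fun h he => h (congrArg Sigma.fst he))
  have hedges : ∀ s ∈ L, ∀ e ∈ s.2.2.edges, e ∈ W.edges ∧ e ∉ B := by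
    intro s hs e he
    have hm : e ∈ ((L.map (fun s => s.2.2.edges)).flatten) :=
      List.mem_flatten.mpr ⟨s.2.2.edges, List.mem_map_of_mem hs, he⟩
    rw [Stmt18Aux.pieces_edges] at hm
    have := List.mem_filter.mp hm
    exact ⟨this.1, by simpa using this.2⟩
  have htrans : ∀ s ∈ L, ∀ e ∈ s.2.2.edges, e ∈ Q.edgeSet := by
    intro s hs e he
    rw [hQ, SimpleGraph.edgeSet_fromEdgeSet]
    exact ⟨hedges s hs e he, G.not_isDiag_of_mem_edgeSet (Walk.edges_subset_edgeSet _ he)⟩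
  set Llong := L.filter (fun s => decide (r ≤ (s.2.2.length : ℝ))) with hLl
  set Lshort := L.filter (fun s => !decide (r ≤ (s.2.2.length : ℝ))) with hLs
  have hLlsub : Llong.Sublist L := List.filter_sublist
  have hLlnodup : Llong.Nodup := hLnodup.sublist hLlsub
  have hne1' : ∀ x ∈ Llong, ∀ y ∈ Llong, x ≠ y → x.1 ≠ y.1 :=
    by haveI : Std.Symm (fun s t : (Σ a : V, Σ b : V, G.Walk a b) => s.1 ≠ t.1) :=
         ⟨fun _ _ h => h.symm⟩
       exact (hne1.sublist hLlsub).forall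
  set f : {s // s ∈ Llong} → (Σ a : V, Σ b : V, Q.Walk a b) :=
    fun s => ⟨s.1.1, s.1.2.1, s.1.2.2.transfer Q (htrans s.1 (List.mem_of_mem_filter s.2))⟩
      with hf
  set M := Llong.attach.map f with hM
  have hMnodup : M.Nodup := by
    refine List.Nodup.map_on ?_ (List.nodup_attach.mpr hLlnodup)
    intro x _ y _ hxy
    have h1 : (f x).1 = (f y).1 := congrArg Sigma.fst hxy
    rw [show (f x).1 = x.1.1 from rfl, show (f y).1 = y.1.1 from rfl] at h1
    have : x.1 = y.1 := by
      by_contra hne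
      exact hne1' x.1 x.2 y.1 y.2 hne h1
    exact Subtype.ext this
  have hsupM : ∀ s : {x // x ∈ Llong}, (f s).2.2.support = s.1.2.2.support :=
    fun s => Walk.support_transfer _ _
  refine ⟨M.toFinset, ⟨?_, ?_⟩, ?_⟩
  · intro p hp
    rw [List.mem_toFinset, hM, List.mem_map] at hp
    obtain ⟨s, -, rfl⟩ := hp
    have hsL : s.1 ∈ L := List.mem_of_mem_filter s.2
    have hlong : r ≤ (s.1.2.2.length : ℝ) := by
      have := (List.mem_filter.mp s.2).2
      simpa using this
    refine ⟨(hpath s.1 hsL).transfer _, ?_⟩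
    rw [show (f s).2.2.length = s.1.2.2.length from Walk.length_transfer _ _]
    exact hlong
  · intro p hp q hq hpq x hxp
    rw [List.mem_toFinset, hM, List.mem_map] at hp hq
    obtain ⟨s, -, rfl⟩ := hp
    obtain ⟨t, -, rfl⟩ := hq
    have hst1 : s.1 ≠ t.1 := by
      intro h
      exact hpq (congrArg f (Subtype.ext h))
    have hdisj' : s.1.2.2.support.Disjoint t.1.2.2.support :=
      (show ∀ ⦃a⦄, a ∈ L → ∀ ⦃b⦄, b ∈ L → a ≠ b → a.2.2.support.Disjoint b.2.2.support from by haveI : Std.Symm (fun s t : (Σ a : V, Σ b : V, G.Walk a b) => s.2.2.support.Disjoint t.2.2.support) := ⟨fun _ _ h => h.symm⟩; exact hdisjL.forall) (List.mem_of_mem_filter s.2)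
        (List.mem_of_mem_filter t.2) hst1
    rw [hsupM s] at hxp
    rw [hsupM t]
    exact hdisj' hxp
  · set g : (Σ a : V, Σ b : V, G.Walk a b) → ℕ := fun s => s.2.2.length + 1 with hg
    have hdisjP : ∀ p ∈ M.toFinset, ∀ q ∈ M.toFinset, p ≠ q →
        Disjoint (p.2.2.support.toFinset) (q.2.2.support.toFinset) := by
      intro p hp q hq hpq
      rw [List.mem_toFinset, hM, List.mem_map] at hp hq
      obtain ⟨s, -, rfl⟩ := hp
      obtain ⟨t, -, rfl⟩ := hq
      have hst1 : s.1 ≠ t.1 := by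
        intro h
        exact hpq (congrArg f (Subtype.ext h))
      have hdisj' : s.1.2.2.support.Disjoint t.1.2.2.support :=
        (show ∀ ⦃a⦄, a ∈ L → ∀ ⦃b⦄, b ∈ L → a ≠ b → a.2.2.support.Disjoint b.2.2.support from by haveI : Std.Symm (fun s t : (Σ a : V, Σ b : V, G.Walk a b) => s.2.2.support.Disjoint t.2.2.support) := ⟨fun _ _ h => h.symm⟩; exact hdisjL.forall) (List.mem_of_mem_filter s.2)
          (List.mem_of_mem_filter t.2) hst1
      rw [Finset.disjoint_left]
      intro a ha hb
      rw [List.mem_toFinset, hsupM s] at ha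
      rw [List.mem_toFinset, hsupM t] at hb
      exact hdisj' ha hb
    have hcov : coveredCard M.toFinset = ∑ p ∈ M.toFinset, p.2.2.support.toFinset.card :=
      Finset.card_biUnion hdisjP
    have hsum1 : ∑ p ∈ M.toFinset, p.2.2.support.toFinset.card
        = (M.map (fun p => p.2.2.support.toFinset.card)).sum :=
      List.sum_toFinset _ hMnodup
    have hattach : M.map (fun p => p.2.2.support.toFinset.card) = Llong.map g := by
      rw [hM, List.map_map, ← List.attach_map_val (l := Llong) (f := g)]
      apply List.map_congr_left
      intro a _
      have hnd : a.1.2.2.support.Nodup :=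
        (hpath a.1 (List.mem_of_mem_filter a.2)).support_nodup
      show ((f a).2.2.support.toFinset).card = g a.1
      rw [hsupM a, List.toFinset_card_of_nodup hnd, hg]
      exact Walk.length_support _
    have htot : (L.map g).sum = ℓ + 1 := by
      have h1 := congrArg List.length hsup
      rw [List.length_flatten, List.map_map, Walk.length_support, hlen] at h1
      rw [← h1]
      apply congrArg
      apply List.map_congr_left
      intro s _
      exact (Walk.length_support _).symm
    have hperm : List.Perm (Llong ++ Lshort) L := List.filter_append_perm _ L
    have hsplit : (Llong.map g).sum + (Lshort.map g).sum = ℓ + 1 := by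
      rw [← List.sum_append, ← List.map_append]
      rw [(hperm.map g).sum_eq]
      exact htot
    have hshortlen : Lshort.length ≤ B.card + 1 := by
      have h2 : Lshort.length ≤ L.length := List.length_filter_le _ _
      have h3 : L.length = (W.edges.filter (fun e => decide (e ∈ B))).length + 1 :=
        Stmt18Aux.pieces_length G B W
      have h4 : (W.edges.filter (fun e => decide (e ∈ B))).length ≤ B.card := by
        have hnd : (W.edges.filter (fun e => decide (e ∈ B))).Nodup :=
          hW.edges_nodup.filter _
        rw [← List.toFinset_card_of_nodup hnd]
        apply Finset.card_le_card
        intro e he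
        rw [List.mem_toFinset, List.mem_filter] at he
        simpa using he.2
      omega
    have hshortR : (((Lshort.map g).sum : ℕ) : ℝ) ≤ (Lshort.length : ℝ) * (r + 1) := by
      calc (((Lshort.map g).sum : ℕ) : ℝ)
          = (Lshort.map (fun s => ((s.2.2.length : ℝ) + 1))).sum := by
            rw [Nat.cast_list_sum, List.map_map]
            apply congrArg
            apply List.map_congr_left
            intro s _
            simp [hg]
        _ ≤ (Lshort.map (fun s => ((s.2.2.length : ℝ) + 1))).length • (r + 1) := by
            apply List.sum_le_card_nsmul
            intro x hx
            rw [List.mem_map] at hx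
            obtain ⟨s, hs, rfl⟩ := hx
            have hlt : ¬ (r ≤ (s.2.2.length : ℝ)) := by
              have := (List.mem_filter.mp hs).2
              simpa using this
            linarith [lt_of_not_ge hlt]
        _ = (Lshort.length : ℝ) * (r + 1) := by
            rw [List.length_map, nsmul_eq_mul]
    have hcovR : ((coveredCard M.toFinset : ℕ) : ℝ)
        = ((ℓ : ℝ) + 1) - (((Lshort.map g).sum : ℕ) : ℝ) := by
      rw [hcov, hsum1, hattach]
      have h5 : ((List.map g Llong).sum : ℝ) + ((List.map g Lshort).sum : ℝ)
          = (ℓ : ℝ) + 1 := by exact_mod_cast congrArg (Nat.cast : ℕ → ℝ) hsplit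
      linarith
    rw [hcovR]
    have hchain : (((Lshort.map g).sum : ℕ) : ℝ) ≤ (α * ℓ + 1) * (r + 1) := by
      have h6 : (Lshort.length : ℝ) ≤ α * ℓ + 1 := by
        have : (Lshort.length : ℝ) ≤ (B.card : ℝ) + 1 := by exact_mod_cast hshortlen
        linarith
      calc (((Lshort.map g).sum : ℕ) : ℝ) ≤ (Lshort.length : ℝ) * (r + 1) := hshortR
        _ ≤ (α * ℓ + 1) * (r + 1) := by
            apply mul_le_mul_of_nonneg_right h6
            linarith
    have h3α : r * (3 * α) = 1 := by
      rw [hr]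
      field_simp
    nlinarith [mul_le_mul_of_nonneg_left hαℓ hrpos.le, hαpos, hℓpos, hrpos]


end
end
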